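/- arXiv:math/0210053 — 5 statements merged into one kernel-verified Lean document; each statement's English description precedes it below -/
import Mathlib

section
/- Let θ be an algebraic integer of degree m with minimal polynomial x^m - d_1 x^{m-1} - ⋯ - d_m, let 0 < δ < (1 + |d_1| + ⋯ + |d_m|)^{-1}, and let y > 0. For each j let K_j = ⟨y θ^j⟩ be the nearest integer to y θ^j and δ_j = y θ^j - K_j. If |δ_j| ≤ δ for j = A+1, …, A+b with b > m, then K_{j+m} = d_1 K_{j+m-1} + ⋯ + d_m K_j for all j = A+1, …, A+b-m. -/
open Real Filter Set MeasureTheory Polynomial ENNReal Topology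

/-- `μ̂_θ(t) = ∏_{k=0}^∞ cos(2π θ^{-k} t)`. -/
noncomputable def muHat (θ t : ℝ) : ℝ := ∏' k : ℕ, Real.cos (2 * π * θ⁻¹ ^ k * t)

/-- `θ` is a Pisot number: an algebraic integer `> 1` all of whose other conjugates
have modulus `< 1`. -/
def IsPisot (θ : ℝ) : Prop :=
  1 < θ ∧ IsIntegral ℤ θ ∧
    ∀ z : ℂ, Polynomial.aeval z (minpoly ℤ θ) = 0 → z ≠ (θ : ℂ) → ‖z‖ < 1

/-- nearest integer, ties so that `x - ⟨x⟩ ∈ (-1/2, 1/2]`. -/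
noncomputable def nearestInt (x : ℝ) : ℤ := ⌈x - 1/2⌉

/-- distance to the nearest integer. -/
noncomputable def intDist (x : ℝ) : ℝ := |x - round x|

theorem stmt1 (θ : ℝ) (m : ℕ) (hm : 0 < m) (d : Fin m → ℤ)
    (hint : IsIntegral ℤ θ)
    (hmin : minpoly ℤ θ = X ^ m - ∑ i : Fin m, Polynomial.C (d i) * X ^ (m - 1 - (i : ℕ)))
    (δ : ℝ) (hδ0 : 0 < δ) (hδ : δ < (1 + ∑ i : Fin m, |(d i : ℝ)|)⁻¹)
    (y : ℝ) (hy : 0 < y) (A b : ℕ) (hb : m < b)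
    (hsmall : ∀ j : ℕ, A + 1 ≤ j → j ≤ A + b →
      |y * θ ^ j - nearestInt (y * θ ^ j)| ≤ δ) :
    ∀ j : ℕ, A + 1 ≤ j → j ≤ A + b - m →
      nearestInt (y * θ ^ (j + m)) =
        ∑ i : Fin m, d i * nearestInt (y * θ ^ (j + (m - 1 - (i : ℕ)))) := by
  intro j hj1 hj2
  have hjm : j + m ≤ A + b := by omega
  -- θ satisfies its minimal polynomial relation
  have hθm : θ ^ m = ∑ i : Fin m, (d i : ℝ) * θ ^ (m - 1 - (i : ℕ)) := by
    have h0 := minpoly.aeval ℤ θ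
    rw [hmin] at h0
    simp only [map_sub, map_pow, map_sum, map_mul, aeval_X, aeval_C,
      algebraMap_int_eq, eq_intCast, map_intCast] at h0
    linarith [h0]
  have key : y * θ ^ (j + m)
      = ∑ i : Fin m, (d i : ℝ) * (y * θ ^ (j + (m - 1 - (i : ℕ)))) := by
    rw [pow_add, hθm, Finset.mul_sum, Finset.mul_sum]
    refine Finset.sum_congr rfl fun i _ => ?_
    rw [pow_add]; ring
  set N : ℤ := nearestInt (y * θ ^ (j + m))
      - ∑ i : Fin m, d i * nearestInt (y * θ ^ (j + (m - 1 - (i : ℕ)))) with hNdef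
  have hN : (N : ℝ) =
      (∑ i : Fin m, (d i : ℝ) * (y * θ ^ (j + (m - 1 - (i : ℕ)))
        - (nearestInt (y * θ ^ (j + (m - 1 - (i : ℕ)))) : ℝ)))
      - (y * θ ^ (j + m) - (nearestInt (y * θ ^ (j + m)) : ℝ)) := by
    simp only [mul_sub]
    rw [Finset.sum_sub_distrib, ← key, hNdef]
    push_cast
    ring
  have hbound : |(N : ℝ)| < 1 := by
    have h1 : |(N : ℝ)| ≤ (∑ i : Fin m, |(d i : ℝ)| * δ) + δ := by
      rw [hN]
      refine (abs_sub _ _).trans (add_le_add ?_ ?_)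
      · refine (Finset.abs_sum_le_sum_abs _ _).trans ?_
        refine Finset.sum_le_sum fun i _ => ?_
        rw [abs_mul]
        exact mul_le_mul_of_nonneg_left
          (hsmall _ (by omega) (by omega)) (abs_nonneg _)
      · exact hsmall _ (by omega) hjm
    have hS : (0:ℝ) < 1 + ∑ i : Fin m, |(d i : ℝ)| := by
      positivity
    have h2 : (∑ i : Fin m, |(d i : ℝ)| * δ) + δ
        = δ * (1 + ∑ i : Fin m, |(d i : ℝ)|) := by
      rw [← Finset.sum_mul]; ring
    have h3 : δ * (1 + ∑ i : Fin m, |(d i : ℝ)|) < 1 := by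
      calc δ * (1 + ∑ i : Fin m, |(d i : ℝ)|)
          < (1 + ∑ i : Fin m, |(d i : ℝ)|)⁻¹ * (1 + ∑ i : Fin m, |(d i : ℝ)|) :=
            mul_lt_mul_of_pos_right hδ hS
        _ = 1 := inv_mul_cancel₀ hS.ne'
    linarith [h1, h2 ▸ h1]
  have hN0 : |N| < 1 := by
    have h4 : ((|N| : ℤ) : ℝ) < 1 := by rw [Int.cast_abs]; exact hbound
    exact_mod_cast h4
  rw [abs_lt, hNdef] at hN0
  omega
end

section
/- For any sequence (x_i) of real numbers with x_i → +∞, the set {α x_i : i ≥ 1} is dense modulo 1 for Lebesgue-almost every real α. -/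
open Real Filter Set MeasureTheory Polynomial ENNReal Topology

/-- Core lemma: the set of `α` for which `α * x i` always stays `ε`-away from `c`
modulo 1 has measure zero. -/
lemma core_measure_zero (x : ℕ → ℝ) (hx : Tendsto x atTop atTop) (c ε : ℝ)
    (hε : 0 < ε) (hε1 : ε ≤ 1) :
    volume {α : ℝ | ∀ (i : ℕ) (m : ℤ), ε ≤ |α * x i - c - m|} = 0 := by
  set B : Set ℝ := {α : ℝ | ∀ (i : ℕ) (m : ℤ), ε ≤ |α * x i - c - m|} with hB
  by_contra h
  have hrest : volume.restrict B ≠ 0 := by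
    simpa [Measure.restrict_eq_zero] using h
  haveI : (ae (volume.restrict B)).NeBot := ae_neBot.2 hrest
  obtain ⟨α₀, hα₀⟩ := (Besicovitch.ae_tendsto_measure_inter_div volume B).exists
  have hlt : (ENNReal.ofReal (1 - ε / 2)) < 1 := by
    rw [ENNReal.ofReal_lt_one]; linarith
  have hev : ∀ᶠ r in 𝓝[>] (0 : ℝ),
      ENNReal.ofReal (1 - ε / 2)
        < volume (B ∩ Metric.closedBall α₀ r) / volume (Metric.closedBall α₀ r) :=
    hα₀.eventually (eventually_gt_nhds hlt)
  obtain ⟨δ, hδ, hδsub⟩ := (nhdsGT_basis_of_exists_gt ⟨(1 : ℝ), one_pos⟩).eventually_iff.mp hev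
  obtain ⟨i, hi⟩ := (hx.eventually_gt_atTop (max 1 (4 / δ))).exists
  set X : ℝ := x i with hXdef
  have hX1 : (1 : ℝ) < X := lt_of_le_of_lt (le_max_left _ _) hi
  have hX0 : (0 : ℝ) < X := by linarith
  set r : ℝ := 2 / X with hrdef
  have hr0 : 0 < r := by positivity
  have hrX : r * X = 2 := div_mul_cancel₀ 2 hX0.ne'
  have hrδ : r < δ := by
    have h4δ : 4 / δ < X := lt_of_le_of_lt (le_max_right _ _) hi
    have : 4 / δ < X := h4δ
    rw [div_lt_iff₀ hδ] at this
    rw [hrdef, div_lt_iff₀ hX0]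
    nlinarith
  have hkey := hδsub ⟨hr0, hrδ⟩
  -- now derive the opposite inequality
  set m : ℤ := ⌈X * (α₀ - r) - c + ε⌉ with hm
  have hm_ge : (X * (α₀ - r) - c + ε : ℝ) ≤ m := Int.le_ceil _
  have hm_lt : (m : ℝ) < X * (α₀ - r) - c + ε + 1 := Int.ceil_lt_add_one _
  set I : Set ℝ := Ioo ((c + m - ε) / X) ((c + m + ε) / X) with hI
  have hJ : Metric.closedBall α₀ r = Icc (α₀ - r) (α₀ + r) := Real.closedBall_eq_Icc
  have hIJ : I ⊆ Metric.closedBall α₀ r := by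
    rw [hJ]
    rintro y ⟨hy1, hy2⟩
    constructor
    · have h1 : α₀ - r ≤ (c + m - ε) / X := by
        rw [le_div_iff₀ hX0]; nlinarith
      linarith
    · have h2 : (c + m + ε) / X ≤ α₀ + r := by
        rw [div_le_iff₀ hX0]; nlinarith
      linarith
  have hBI : ∀ y ∈ I, y ∉ B := by
    rintro y ⟨hy1, hy2⟩ hyB
    have h1 : c + m - ε < y * X := by rw [div_lt_iff₀ hX0] at hy1; linarith
    have h2 : y * X < c + m + ε := by rw [lt_div_iff₀ hX0] at hy2; linarith
    have h5 := hyB i m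
    rw [← hXdef] at h5
    have h3 : |y * X - c - (m : ℝ)| < ε := abs_lt.2 ⟨by linarith, by linarith⟩
    linarith
  have hvolI : volume I = ENNReal.ofReal (ε * r) := by
    have hd : (c + (m : ℝ) + ε) / X - (c + (m : ℝ) - ε) / X = ε * (2 / X) := by
      field_simp
      ring
    rw [hI, Real.volume_Ioo, hrdef, hd]
  have hvolJ : volume (Metric.closedBall α₀ r) = ENNReal.ofReal (2 * r) :=
    Real.volume_closedBall _ _
  have hsub : B ∩ Metric.closedBall α₀ r ⊆ Metric.closedBall α₀ r \ I := by
    rintro y ⟨hyB, hyJ⟩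
    exact ⟨hyJ, fun hyI => hBI y hyI hyB⟩
  have hdiff : volume (Metric.closedBall α₀ r \ I)
      = ENNReal.ofReal (2 * r) - ENNReal.ofReal (ε * r) := by
    rw [measure_diff hIJ measurableSet_Ioo.nullMeasurableSet
      (by rw [hvolI]; exact ENNReal.ofReal_ne_top), hvolI, hvolJ]
  have hbound : volume (B ∩ Metric.closedBall α₀ r)
      ≤ ENNReal.ofReal (1 - ε / 2) * volume (Metric.closedBall α₀ r) := by
    refine le_trans (measure_mono hsub) ?_
    rw [hdiff, hvolJ, ← ENNReal.ofReal_sub _ (by positivity), ← ENNReal.ofReal_mul (by linarith)]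
    exact ENNReal.ofReal_le_ofReal (by nlinarith)
  have hratio : volume (B ∩ Metric.closedBall α₀ r) / volume (Metric.closedBall α₀ r)
      ≤ ENNReal.ofReal (1 - ε / 2) := ENNReal.div_le_of_le_mul hbound
  exact absurd (lt_of_lt_of_le hkey hratio) (lt_irrefl _)

lemma dense_of_good (x : ℕ → ℝ) (α : ℝ)
    (h : ∀ (q : ℚ) (n : ℕ), ∃ (i : ℕ) (m : ℤ), |α * x i - q - m| < 1 / (n + 1)) :
    Dense (Set.range fun i : ℕ => ((α * x i : ℝ) : AddCircle (1 : ℝ))) := by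
  rw [Metric.dense_iff]
  intro z r hr
  obtain ⟨a, rfl⟩ := QuotientAddGroup.mk_surjective z
  obtain ⟨q, hq⟩ := exists_rat_near a (half_pos hr)
  obtain ⟨n, hn⟩ := exists_nat_one_div_lt (half_pos hr)
  obtain ⟨i, m, him⟩ := h q n
  refine ⟨((α * x i : ℝ) : AddCircle (1 : ℝ)), ?_, Set.mem_range_self i⟩
  rw [Metric.mem_ball, dist_eq_norm]
  have hcoe : ((α * x i : ℝ) : AddCircle (1 : ℝ)) - (a : AddCircle (1 : ℝ))
      = ((α * x i - a - m : ℝ) : AddCircle (1 : ℝ)) := by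
    have hm0 : ((m : ℝ) : AddCircle (1 : ℝ)) = 0 := by
      rw [AddCircle.coe_eq_zero_iff]
      exact ⟨m, by simp⟩
    push_cast
    rw [sub_sub]
    push_cast
    rw [QuotientAddGroup.mk_sub, QuotientAddGroup.mk_add, hm0, add_zero]
  rw [hcoe]
  calc ‖((α * x i - a - m : ℝ) : AddCircle (1 : ℝ))‖
      ≤ ‖(α * x i - a - m : ℝ)‖ := QuotientAddGroup.norm_mk_le_norm
    _ = |α * x i - a - m| := Real.norm_eq_abs _
    _ ≤ |α * x i - q - m| + |q - a| := by
        have : α * x i - a - m = (α * x i - q - m) + (q - a) := by ring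
        rw [this]; exact abs_add_le _ _
    _ < 1 / (n + 1) + r / 2 := add_lt_add him (by rw [abs_sub_comm]; exact hq)
    _ < r := by linarith

theorem stmt7 (x : ℕ → ℝ) (hx : Tendsto x atTop atTop) :
    ∀ᵐ α : ℝ ∂volume,
      Dense (Set.range fun i : ℕ => ((α * x i : ℝ) : AddCircle (1 : ℝ))) := by
  have key : ∀ (q : ℚ) (n : ℕ), ∀ᵐ α : ℝ ∂volume,
      ∃ (i : ℕ) (m : ℤ), |α * x i - q - m| < 1 / ((n : ℝ) + 1) := by
    intro q n
    have hε : (0 : ℝ) < 1 / ((n : ℝ) + 1) := by positivity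
    have hε1 : (1 : ℝ) / ((n : ℝ) + 1) ≤ 1 := by
      rw [div_le_one (by positivity)]
      simp
    rw [ae_iff]
    have := core_measure_zero x hx (q : ℝ) (1 / ((n : ℝ) + 1)) hε hε1
    convert this using 2
    ext α
    push_neg
    simp [not_lt]
  have key2 : ∀ᵐ α : ℝ ∂volume, ∀ (q : ℚ) (n : ℕ),
      ∃ (i : ℕ) (m : ℤ), |α * x i - q - m| < 1 / ((n : ℝ) + 1) :=
    ae_all_iff.2 fun q => ae_all_iff.2 fun n => key q n
  filter_upwards [key2] with α hα
  exact dense_of_good x α fun q n => hα q n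
end

section
/- Let θ > 1 be a Pisot number with θ ≠ 2, Λ ∈ ℤ[θ], and define φ_Λ(q) = ∏_{j=-∞}^∞ cos(2π Λ q θ^j) for q ∈ ℤ[θ]. Then for any a, b ∈ ℤ[θ], φ_Λ(a + b θ^n) → φ_Λ(a)·φ_Λ(b) as n → +∞. -/
open Real Filter Set MeasureTheory Polynomial ENNReal Topology

open IntermediateField

lemma cosLip (x y : ℝ) : |Real.cos x - Real.cos y| ≤ |x - y| := by
  rw [Real.cos_sub_cos, abs_mul, abs_mul]
  have h1 : |Real.sin ((x + y) / 2)| ≤ 1 := Real.abs_sin_le_one _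
  have h2 : |Real.sin ((x - y) / 2)| ≤ |(x - y) / 2| := Real.abs_sin_le_abs
  have h3 : |(x - y) / 2| = |x - y| / 2 := by rw [abs_div]; norm_num
  have h4 : |(-2 : ℝ)| = 2 := by norm_num
  rw [h4]
  have h5 : |Real.sin ((x - y) / 2)| ≤ |x - y| / 2 := h3 ▸ h2
  have h6 : 2 * |Real.sin ((x + y) / 2)| ≤ 2 := by linarith
  have h7 : (2 * |Real.sin ((x + y) / 2)|) * |Real.sin ((x - y) / 2)| ≤ 2 * (|x - y| / 2) :=
    mul_le_mul h6 h5 (abs_nonneg _) (by norm_num)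
  linarith [h7]

lemma finProdAbsLeOne {ι : Type*} (f : ι → ℝ) (hf : ∀ i, |f i| ≤ 1) (s : Finset ι) :
    |∏ i ∈ s, f i| ≤ 1 := by
  rw [Finset.abs_prod]
  exact Finset.prod_le_one (fun i _ => abs_nonneg _) (fun i _ => hf i)

lemma finProdDiff {ι : Type*} (f g : ι → ℝ) (hf : ∀ i, |f i| ≤ 1) (hg : ∀ i, |g i| ≤ 1)
    (s : Finset ι) : |∏ i ∈ s, f i - ∏ i ∈ s, g i| ≤ ∑ i ∈ s, |f i - g i| := by
  classical
  induction s using Finset.induction with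
  | empty => simp
  | insert _ _ hx ih =>
    rename_i x s
    rw [Finset.prod_insert hx, Finset.prod_insert hx, Finset.sum_insert hx]
    have key : |f x * ∏ i ∈ s, f i - g x * ∏ i ∈ s, g i|
        ≤ |f x| * |∏ i ∈ s, f i - ∏ i ∈ s, g i| + |f x - g x| * |∏ i ∈ s, g i| := by
      have : f x * ∏ i ∈ s, f i - g x * ∏ i ∈ s, g i
          = f x * (∏ i ∈ s, f i - ∏ i ∈ s, g i) + (f x - g x) * ∏ i ∈ s, g i := by ring
      rw [this]
      calc _ ≤ |f x * (∏ i ∈ s, f i - ∏ i ∈ s, g i)| + |(f x - g x) * ∏ i ∈ s, g i| := abs_add_le _ _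
        _ = _ := by rw [abs_mul, abs_mul]
    have h1 : |f x| * |∏ i ∈ s, f i - ∏ i ∈ s, g i| ≤ |∏ i ∈ s, f i - ∏ i ∈ s, g i| := by
      nlinarith [abs_nonneg (∏ i ∈ s, f i - ∏ i ∈ s, g i), hf x, abs_nonneg (f x)]
    have h2 : |f x - g x| * |∏ i ∈ s, g i| ≤ |f x - g x| := by
      nlinarith [abs_nonneg (f x - g x), finProdAbsLeOne g hg s, abs_nonneg (∏ i ∈ s, g i)]
    linarith

lemma multipliableOfSummable {ι : Type*} (f : ι → ℝ) (hf : ∀ i, |f i| ≤ 1)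
    (hs : Summable fun i => |f i - 1|) : Multipliable f := by
  classical
  have hcs : CauchySeq fun s : Finset ι => ∏ i ∈ s, f i := by
    rw [Metric.cauchySeq_iff']
    intro ε hε
    obtain ⟨s, hsv⟩ := summable_iff_vanishing.1 hs (Metric.ball (0:ℝ) ε) (Metric.ball_mem_nhds 0 hε)
    refine ⟨s, fun t ht => ?_⟩
    rw [Real.dist_eq]
    have hsub : s ⊆ t := ht
    have h1 : ∏ i ∈ t, f i - ∏ i ∈ s, f i = (∏ i ∈ s, f i) * (∏ i ∈ t \ s, f i - 1) := by
      rw [mul_sub, mul_one, ← Finset.prod_union Finset.disjoint_sdiff]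
      congr 1
      rw [Finset.union_sdiff_of_subset hsub]
    rw [h1, abs_mul]
    have h2 : |∏ i ∈ t \ s, f i - 1| ≤ ∑ i ∈ t \ s, |f i - 1| := by
      have := finProdDiff f (fun _ => 1) hf (by intro i; simp) (t \ s)
      simpa using this
    have h3 : ∑ i ∈ t \ s, |f i - 1| < ε := by
      have h4 := hsv (t \ s) Finset.sdiff_disjoint
      rw [Metric.mem_ball, Real.dist_eq, sub_zero] at h4
      have h5 : (0:ℝ) ≤ ∑ i ∈ t \ s, |f i - 1| := Finset.sum_nonneg fun i _ => abs_nonneg _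
      rw [abs_of_nonneg h5] at h4
      exact h4
    have h6 := finProdAbsLeOne f hf s
    have h7 : (0:ℝ) ≤ |∏ i ∈ t \ s, f i - 1| := abs_nonneg _
    nlinarith
  obtain ⟨a, ha⟩ := cauchySeq_tendsto_of_complete hcs
  exact ⟨a, ha⟩

lemma tprodDiff {ι : Type*} (f g : ι → ℝ) (hf : ∀ i, |f i| ≤ 1) (hg : ∀ i, |g i| ≤ 1)
    (hfm : Multipliable f) (hgm : Multipliable g)
    (hfg : Summable fun i => |f i - g i|) :
    |∏' i, f i - ∏' i, g i| ≤ ∑' i, |f i - g i| := by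
  have h1 : Tendsto (fun s : Finset ι => |∏ i ∈ s, f i - ∏ i ∈ s, g i|) atTop
      (𝓝 |∏' i, f i - ∏' i, g i|) :=
    (Filter.Tendsto.sub hfm.hasProd hgm.hasProd).abs
  refine le_of_tendsto h1 (Filter.Eventually.of_forall fun s => ?_)
  calc |∏ i ∈ s, f i - ∏ i ∈ s, g i| ≤ ∑ i ∈ s, |f i - g i| := finProdDiff f g hf hg s
    _ ≤ ∑' i, |f i - g i| := Summable.sum_le_tsum s (fun i _ => abs_nonneg _) hfg

lemma absTprodLeOne {ι : Type*} (f : ι → ℝ) (hf : ∀ i, |f i| ≤ 1) : |∏' i, f i| ≤ 1 := by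
  by_cases hm : Multipliable f
  · have h1 : Tendsto (fun s : Finset ι => |∏ i ∈ s, f i|) atTop (𝓝 |∏' i, f i|) :=
      Filter.Tendsto.abs hm.hasProd
    exact le_of_tendsto h1 (Filter.Eventually.of_forall fun s => finProdAbsLeOne f hf s)
  · rw [tprod_eq_one_of_not_multipliable hm]; simp

lemma tsumLeGeom {f : ℕ → ℝ} {c t : ℝ} (ht0 : 0 ≤ t) (ht1 : t < 1)
    (h0 : ∀ i, 0 ≤ f i) (hb : ∀ i, f i ≤ c * t ^ i) :
    Summable f ∧ ∑' i, f i ≤ c * (1 - t)⁻¹ := by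
  have hsg : Summable fun i : ℕ => c * t ^ i := (summable_geometric_of_lt_one ht0 ht1).mul_left c
  have hsf : Summable f := Summable.of_nonneg_of_le h0 hb hsg
  refine ⟨hsf, ?_⟩
  calc ∑' i, f i ≤ ∑' i, c * t ^ i := Summable.tsum_le_tsum hb hsf hsg
    _ = c * (1 - t)⁻¹ := by rw [tsum_mul_left, tsum_geometric_of_lt_one ht0 ht1]


lemma existsBound {ι : Type*} (s : Finset ι) (f : ι → ℝ) (h0 : ∀ i ∈ s, 0 ≤ f i)
    (h1 : ∀ i ∈ s, f i < 1) : ∃ ρ : ℝ, 0 ≤ ρ ∧ ρ < 1 ∧ ∀ i ∈ s, f i ≤ ρ := by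
  classical
  induction s using Finset.induction with
  | empty => exact ⟨0, le_refl _, one_pos, by simp⟩
  | insert _ _ hx ih =>
    rename_i x s
    obtain ⟨ρ, hρ0, hρ1, hρle⟩ := ih (fun i hi => h0 i (Finset.mem_insert_of_mem hi))
      (fun i hi => h1 i (Finset.mem_insert_of_mem hi))
    refine ⟨max ρ (f x), le_trans hρ0 (le_max_left _ _), ?_, ?_⟩
    · exact max_lt hρ1 (h1 x (Finset.mem_insert_self x s))
    · intro i hi
      rcases Finset.mem_insert.1 hi with h | h
      · rw [h]; exact le_max_right _ _
      · exact le_trans (hρle i h) (le_max_left _ _)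

set_option maxHeartbeats 1000000 in
lemma pisotDecay (θ : ℝ) (hθ : IsPisot θ) {q : ℝ} (hq : q ∈ Algebra.adjoin ℤ {θ}) :
    ∃ C r : ℝ, 0 < C ∧ 0 ≤ r ∧ r < 1 ∧
      ∀ j : ℕ, ∃ m : ℤ, |q * θ ^ j - (m : ℝ)| ≤ C * r ^ j := by
  obtain ⟨hθ1, hθint, hconj⟩ := hθ
  have hθQ : IsIntegral ℚ θ := hθint.tower_top
  haveI : FiniteDimensional ℚ ℚ⟮θ⟯ := IntermediateField.adjoin.finiteDimensional hθQ
  set ξ : ℚ⟮θ⟯ := IntermediateField.AdjoinSimple.gen ℚ θ with hξdef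
  have hvalξ : (algebraMap ℚ⟮θ⟯ ℝ) ξ = θ := IntermediateField.AdjoinSimple.algebraMap_gen ℚ θ
  -- the real embedding
  set σ₀ : ℚ⟮θ⟯ →ₐ[ℚ] ℂ :=
    (Complex.ofRealAm.restrictScalars ℚ).comp (IntermediateField.val ℚ⟮θ⟯) with hσ₀
  have hσ₀ξ : σ₀ ξ = (θ : ℂ) := by
    simp only [hσ₀, AlgHom.comp_apply, AlgHom.coe_restrictScalars']
    congr 1
  -- all other embeddings send ξ to small conjugates
  have hsmall : ∀ σ : ℚ⟮θ⟯ →ₐ[ℚ] ℂ, σ ≠ σ₀ → ‖σ ξ‖ < 1 := by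
    intro σ hσ
    have hroot : Polynomial.aeval (σ ξ) (minpoly ℚ ξ) = 0 := minpoly.aeval_algHom _ σ ξ
    have hmin1 : minpoly ℚ θ = minpoly ℚ ξ := by
      conv_lhs => rw [← hvalξ]
      exact minpoly.algebraMap_eq (algebraMap ℚ⟮θ⟯ ℝ).injective ξ
    have hmin2 : minpoly ℚ θ = (minpoly ℤ θ).map (algebraMap ℤ ℚ) :=
      minpoly.isIntegrallyClosed_eq_field_fractions ℚ ℝ hθint
    have hroot' : Polynomial.aeval (σ ξ) (minpoly ℤ θ) = 0 := by
      have : Polynomial.aeval (σ ξ) ((minpoly ℤ θ).map (algebraMap ℤ ℚ)) = 0 := by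
        rw [← hmin2, hmin1]; exact hroot
      rwa [Polynomial.aeval_map_algebraMap] at this
    refine hconj _ hroot' ?_
    intro hzeq
    apply hσ
    have hgen : IsIntegral ℚ θ := hθQ
    apply PowerBasis.algHom_ext (IntermediateField.adjoin.powerBasis hgen)
    rw [IntermediateField.adjoin.powerBasis_gen]
    rw [show (IntermediateField.AdjoinSimple.gen ℚ θ) = ξ from rfl]; exact hzeq.trans hσ₀ξ.symm
  -- choose ρ
  classical
  obtain ⟨ρ, hρ0, hρ1, hρle'⟩ := existsBound (Finset.univ.erase σ₀)
    (fun σ => ‖σ ξ‖) (fun i _ => norm_nonneg _)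
    (fun i hi => hsmall i (Finset.ne_of_mem_erase hi))
  have hρle : ∀ σ : ℚ⟮θ⟯ →ₐ[ℚ] ℂ, σ ≠ σ₀ → ‖σ ξ‖ ≤ ρ := by
    intro σ hσ
    exact hρle' σ (Finset.mem_erase.2 ⟨hσ, Finset.mem_univ σ⟩)
  -- the element x
  rw [Algebra.adjoin_singleton_eq_range_aeval] at hq
  obtain ⟨P, hP⟩ := hq
  set x : ℚ⟮θ⟯ := Polynomial.aeval ξ P with hxdef
  have hvalx : (algebraMap ℚ⟮θ⟯ ℝ) x = q := by
    rw [hxdef, ← hP]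
    have := Polynomial.aeval_algHom_apply
      ((IntermediateField.val ℚ⟮θ⟯).restrictScalars ℤ) ξ P
    simpa [hvalξ, show (ξ:ℝ) = θ from hvalξ] using this.symm
  have hξint : IsIntegral ℤ ξ := by
    rw [← isIntegral_algHom_iff ((IntermediateField.val ℚ⟮θ⟯).restrictScalars ℤ)
      Subtype.val_injective]
    exact hθint
  have hint : ∀ j : ℕ, IsIntegral ℤ (x * ξ ^ j) := by
    intro j
    have hmem : x * ξ ^ j ∈ Algebra.adjoin ℤ {ξ} := by
      apply mul_mem
      · exact Polynomial.aeval_mem_adjoin_singleton ℤ ξ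
      · exact pow_mem (Algebra.self_mem_adjoin_singleton ℤ ξ) j
    exact adjoin_le_integralClosure hξint hmem
  refine ⟨1 + ∑ σ : ℚ⟮θ⟯ →ₐ[ℚ] ℂ, ‖σ x‖, ρ, by positivity, hρ0, hρ1, ?_⟩
  intro j
  set y : ℚ⟮θ⟯ := x * ξ ^ j with hydef
  have htr : IsIntegral ℤ (Algebra.trace ℚ ℚ⟮θ⟯ y) := Algebra.isIntegral_trace (hint j)
  obtain ⟨m, hm⟩ := IsIntegrallyClosed.isIntegral_iff.mp htr
  refine ⟨m, ?_⟩
  have hemb : (algebraMap ℚ ℂ) (Algebra.trace ℚ ℚ⟮θ⟯ y) = ∑ σ : ℚ⟮θ⟯ →ₐ[ℚ] ℂ, σ y :=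
    trace_eq_sum_embeddings ℂ
  have hmC : (m : ℂ) = ∑ σ : ℚ⟮θ⟯ →ₐ[ℚ] ℂ, σ y := by
    rw [← hemb, ← hm]; simp
  have hσ₀y : σ₀ y = ((q * θ ^ j : ℝ) : ℂ) := by
    have : (algebraMap ℚ⟮θ⟯ ℝ) y = q * θ ^ j := by
      rw [hydef, map_mul, map_pow, hvalx, hvalξ]
    simp [hσ₀, ← this]
    rfl
  have hsplit : (∑ σ : ℚ⟮θ⟯ →ₐ[ℚ] ℂ, σ y)
      = σ₀ y + ∑ σ ∈ Finset.univ.erase σ₀, σ y := by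
    rw [← Finset.sum_erase_add Finset.univ _ (Finset.mem_univ σ₀), add_comm]
  have hkey : ((q * θ ^ j - m : ℝ) : ℂ) = -∑ σ ∈ Finset.univ.erase σ₀, σ y := by
    push_cast at hσ₀y ⊢
    rw [hmC, hsplit, hσ₀y]
    ring
  have habs : |q * θ ^ j - (m : ℝ)| = ‖(((q * θ ^ j - m : ℝ) : ℂ))‖ := by
    rw [Complex.norm_real, Real.norm_eq_abs]
  rw [habs, hkey, norm_neg]
  calc ‖∑ σ ∈ Finset.univ.erase σ₀, σ y‖
      ≤ ∑ σ ∈ Finset.univ.erase σ₀, ‖σ y‖ := norm_sum_le _ _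
    _ ≤ ∑ σ ∈ Finset.univ.erase σ₀, ‖σ x‖ * ρ ^ j := by
        apply Finset.sum_le_sum
        intro σ hσmem
        rw [hydef, map_mul, map_pow, norm_mul, norm_pow]
        exact mul_le_mul_of_nonneg_left
          (pow_le_pow_left₀ (norm_nonneg _) (hρle σ (Finset.ne_of_mem_erase hσmem)) j)
          (norm_nonneg _)
    _ = (∑ σ ∈ Finset.univ.erase σ₀, ‖σ x‖) * ρ ^ j := by
        rw [← Finset.sum_mul]
    _ ≤ (1 + ∑ σ : ℚ⟮θ⟯ →ₐ[ℚ] ℂ, ‖σ x‖) * ρ ^ j := by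
        gcongr
        · calc ∑ σ ∈ Finset.univ.erase σ₀, ‖σ x‖
              ≤ ∑ σ : ℚ⟮θ⟯ →ₐ[ℚ] ℂ, ‖σ x‖ :=
                Finset.sum_le_sum_of_subset_of_nonneg (Finset.erase_subset _ _)
                  (fun _ _ _ => norm_nonneg _)
            _ ≤ 1 + ∑ σ : ℚ⟮θ⟯ →ₐ[ℚ] ℂ, ‖σ x‖ := by linarith

lemma pisotDecay' (θ : ℝ) (hθ : IsPisot θ) {q : ℝ} (hq : q ∈ Algebra.adjoin ℤ {θ}) :
    ∃ C r : ℝ, 0 < C ∧ 0 ≤ r ∧ r < 1 ∧ θ⁻¹ ≤ r ∧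
      ∀ j : ℤ, ∃ m : ℤ, |q * θ ^ j - (m : ℝ)| ≤ C * r ^ j.natAbs := by
  obtain ⟨C, r, hC, hr0, hr1, hbd⟩ := pisotDecay θ hθ hq
  have hθ1 : 1 < θ := hθ.1
  have hθ0 : (0:ℝ) < θ := lt_trans one_pos hθ1
  have hθi0 : 0 ≤ θ⁻¹ := le_of_lt (inv_pos.2 hθ0)
  have hθi1 : θ⁻¹ < 1 := by
    rw [inv_lt_one_iff₀]; right; exact hθ1
  refine ⟨max C (|q| + 1), max r θ⁻¹, lt_max_of_lt_left hC, le_max_of_le_left hr0,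
    max_lt hr1 hθi1, le_max_right _ _, ?_⟩
  intro j
  rcases le_or_gt 0 j with hj | hj
  · obtain ⟨m, hm⟩ := hbd j.toNat
    refine ⟨m, ?_⟩
    have hzp : θ ^ j = θ ^ j.toNat := by
      rw [← zpow_natCast, Int.toNat_of_nonneg hj]
    rw [hzp]
    have hna : j.natAbs = j.toNat := by omega
    rw [hna]
    calc |q * θ ^ j.toNat - (m:ℝ)| ≤ C * r ^ j.toNat := hm
      _ ≤ max C (|q| + 1) * max r θ⁻¹ ^ j.toNat := by
          apply mul_le_mul (le_max_left _ _)
            (pow_le_pow_left₀ hr0 (le_max_left _ _) _)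
            (pow_nonneg hr0 _) (le_trans (le_of_lt hC) (le_max_left _ _))
  · refine ⟨0, ?_⟩
    have hzp : θ ^ j = θ⁻¹ ^ j.natAbs := by
      rw [← zpow_neg_one, ← zpow_natCast, ← zpow_mul]
      congr 1
      omega
    rw [Int.cast_zero, sub_zero, abs_mul, hzp, abs_pow, abs_of_nonneg hθi0]
    calc |q| * θ⁻¹ ^ j.natAbs ≤ (|q| + 1) * θ⁻¹ ^ j.natAbs := by
          apply mul_le_mul_of_nonneg_right (by linarith) (pow_nonneg hθi0 _)
      _ ≤ max C (|q| + 1) * max r θ⁻¹ ^ j.natAbs := by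
          apply mul_le_mul (le_max_right _ _)
            (pow_le_pow_left₀ hθi0 (le_max_right _ _) _)
            (pow_nonneg hθi0 _) (by positivity)

lemma cosNear {t : ℝ} (m : ℤ) {d : ℝ} (h : |t - (m:ℝ)| ≤ d) :
    |Real.cos (2 * π * t) - 1| ≤ 2 * π * d := by
  have h1 : Real.cos (2 * π * t) = Real.cos (2 * π * t - m * (2 * π)) :=
    (Real.cos_sub_int_mul_two_pi _ m).symm
  have h2 : (1:ℝ) = Real.cos 0 := Real.cos_zero.symm
  rw [h1, h2]
  calc |Real.cos (2 * π * t - m * (2 * π)) - Real.cos 0|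
      ≤ |2 * π * t - m * (2 * π) - 0| := cosLip _ _
    _ = 2 * π * |t - m| := by
        rw [sub_zero]
        have : 2 * π * t - m * (2 * π) = 2 * π * (t - m) := by ring
        rw [this, abs_mul, abs_of_nonneg (by positivity : (0:ℝ) ≤ 2 * π)]
    _ ≤ 2 * π * d := by
        apply mul_le_mul_of_nonneg_left h (by positivity)

lemma cosShiftNear (u : ℝ) {t : ℝ} (m : ℤ) {d : ℝ} (h : |t - (m:ℝ)| ≤ d) :
    |Real.cos (u + 2 * π * t) - Real.cos u| ≤ 2 * π * d := by
  have h1 : Real.cos (u + 2 * π * t) = Real.cos (u + 2 * π * t - m * (2 * π)) :=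
    (Real.cos_sub_int_mul_two_pi _ m).symm
  rw [h1]
  calc |Real.cos (u + 2 * π * t - m * (2 * π)) - Real.cos u|
      ≤ |u + 2 * π * t - m * (2 * π) - u| := cosLip _ _
    _ = 2 * π * |t - m| := by
        have : u + 2 * π * t - m * (2 * π) - u = 2 * π * (t - m) := by ring
        rw [this, abs_mul, abs_of_nonneg (by positivity : (0:ℝ) ≤ 2 * π)]
    _ ≤ 2 * π * d := mul_le_mul_of_nonneg_left h (by positivity)

lemma summableIntGeom (c r : ℝ) (hr0 : 0 ≤ r) (hr1 : r < 1) :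
    Summable (fun j : ℤ => c * r ^ j.natAbs) := by
  apply Summable.of_nat_of_neg_add_one
  · have : (fun n : ℕ => c * r ^ (n : ℤ).natAbs) = fun n : ℕ => c * r ^ n := by
      funext n; simp
    rw [this]
    exact (summable_geometric_of_lt_one hr0 hr1).mul_left c
  · have : (fun n : ℕ => c * r ^ (-((n:ℤ) + 1)).natAbs) = fun n : ℕ => (c * r) * r ^ n := by
      funext n
      have : (-((n:ℤ) + 1)).natAbs = n + 1 := by omega
      rw [this, pow_succ]
      ring
    rw [this]
    exact (summable_geometric_of_lt_one hr0 hr1).mul_left (c * r)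

def eIci (N : ℤ) : ℕ ≃ ↥(Set.Ici N) where
  toFun i := ⟨N + i, by simp [Set.mem_Ici]⟩
  invFun j := (j.1 - N).toNat
  left_inv i := by simp
  right_inv j := by
    have hj := j.2
    rw [Set.mem_Ici] at hj
    apply Subtype.ext
    simp only
    omega
  
def eIio (N : ℤ) : ℕ ≃ ↥(Set.Iio N) where
  toFun i := ⟨N - 1 - i, by simp [Set.mem_Iio]; omega⟩
  invFun j := (N - 1 - j.1).toNat
  left_inv i := by simp
  right_inv j := by
    have hj := j.2
    rw [Set.mem_Iio] at hj
    apply Subtype.ext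
    simp only
    omega

@[simp] lemma eIci_coe (N : ℤ) (i : ℕ) : ((eIci N i : ↥(Set.Ici N)) : ℤ) = N + i := rfl
@[simp] lemma eIio_coe (N : ℤ) (i : ℕ) : ((eIio N i : ↥(Set.Iio N)) : ℤ) = N - 1 - i := rfl


lemma estBlock {s : Set ℤ} (e : ℕ ≃ ↥s) (f g : ↥s → ℝ)
    (hf : ∀ j, |f j| ≤ 1) (hg : ∀ j, |g j| ≤ 1)
    (hfm : Multipliable f) (hgm : Multipliable g)
    {c t : ℝ} (ht0 : 0 ≤ t) (ht1 : t < 1)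
    (hb : ∀ i : ℕ, |f (e i) - g (e i)| ≤ c * t ^ i) :
    |∏' j, f j - ∏' j, g j| ≤ c * (1 - t)⁻¹ := by
  obtain ⟨hsumN, htsumN⟩ := tsumLeGeom ht0 ht1 (fun i => abs_nonneg _) hb
  have hsum : Summable (fun j : ↥s => |f j - g j|) := e.summable_iff.1 hsumN
  calc |∏' j, f j - ∏' j, g j| ≤ ∑' j, |f j - g j| := tprodDiff f g hf hg hfm hgm hsum
    _ = ∑' i, |f (e i) - g (e i)| := (e.tsum_eq (fun j => |f j - g j|)).symm
    _ ≤ c * (1 - t)⁻¹ := htsumN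

lemma cosOneSub {θ Λ x C r : ℝ}
    (hbd : ∀ j : ℤ, ∃ m : ℤ, |Λ * x * θ ^ j - (m:ℝ)| ≤ C * r ^ j.natAbs) (j : ℤ) :
    |Real.cos (2 * π * Λ * x * θ ^ j) - 1| ≤ 2 * π * (C * r ^ j.natAbs) := by
  obtain ⟨m, hm⟩ := hbd j
  have harg : 2 * π * Λ * x * θ ^ j = 2 * π * (Λ * x * θ ^ j) := by ring
  rw [harg]
  exact cosNear m hm

lemma cosSummable {θ Λ x C r : ℝ} (hr0 : 0 ≤ r) (hr1 : r < 1)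
    (hbd : ∀ j : ℤ, ∃ m : ℤ, |Λ * x * θ ^ j - (m:ℝ)| ≤ C * r ^ j.natAbs) :
    Summable (fun j : ℤ => |Real.cos (2 * π * Λ * x * θ ^ j) - 1|) := by
  apply Summable.of_nonneg_of_le (fun j => abs_nonneg _) (cosOneSub hbd)
  have : (fun j : ℤ => 2 * π * (C * r ^ j.natAbs)) = fun j : ℤ => (2 * π * C) * r ^ j.natAbs := by
    funext j; ring
  rw [this]
  exact summableIntGeom _ _ hr0 hr1

lemma cosMultSub {θ Λ x C r : ℝ} (hr0 : 0 ≤ r) (hr1 : r < 1)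
    (hbd : ∀ j : ℤ, ∃ m : ℤ, |Λ * x * θ ^ j - (m:ℝ)| ≤ C * r ^ j.natAbs) (s : Set ℤ) :
    Multipliable (fun j : ↥s => Real.cos (2 * π * Λ * x * θ ^ (j:ℤ))) :=
  multipliableOfSummable _ (fun j => Real.abs_cos_le_one _)
    ((cosSummable hr0 hr1 hbd).subtype s)

def eShift (d M N : ℤ) (h : M - d = N) : ↥(Set.Iio M) ≃ ↥(Set.Iio N) where
  toFun j := ⟨(j:ℤ) - d, by have := j.2; rw [Set.mem_Iio] at *; omega⟩
  invFun j := ⟨(j:ℤ) + d, by have := j.2; rw [Set.mem_Iio] at *; omega⟩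
  left_inv j := by apply Subtype.ext; simp
  right_inv j := by apply Subtype.ext; simp

@[simp] lemma eShift_coe (d M N : ℤ) (h : M - d = N) (j : ↥(Set.Iio M)) :
    ((eShift d M N h j : ↥(Set.Iio N)) : ℤ) = (j:ℤ) - d := rfl

set_option maxHeartbeats 2000000 in
theorem stmt13 (θ : ℝ) (hθ : IsPisot θ) (hθ2 : θ ≠ 2) (Λ a b : ℝ)
    (hΛ : Λ ∈ Algebra.adjoin ℤ {θ}) (ha : a ∈ Algebra.adjoin ℤ {θ})
    (hb : b ∈ Algebra.adjoin ℤ {θ}) :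
    Tendsto (fun n : ℕ => ∏' j : ℤ, Real.cos (2 * π * Λ * (a + b * θ ^ n) * θ ^ j)) atTop
      (𝓝 ((∏' j : ℤ, Real.cos (2 * π * Λ * a * θ ^ j)) *
        ∏' j : ℤ, Real.cos (2 * π * Λ * b * θ ^ j))) := by
  have hθ1 : 1 < θ := hθ.1
  have hθ0 : (0:ℝ) < θ := lt_trans one_pos hθ1
  have hθne : θ ≠ 0 := ne_of_gt hθ0
  have hπ : (0:ℝ) < π := Real.pi_pos
  obtain ⟨Ca, ra, hCa, hra0, hra1, hraθ, hbda0⟩ := pisotDecay' θ hθ (mul_mem hΛ ha)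
  obtain ⟨Cb, rb, hCb, hrb0, hrb1, hrbθ, hbdb0⟩ := pisotDecay' θ hθ (mul_mem hΛ hb)
  set C : ℝ := max Ca Cb with hCdef
  set r : ℝ := max ra rb with hrdef
  have hC : 0 < C := lt_max_of_lt_left hCa
  have hr0 : 0 ≤ r := le_max_of_le_left hra0
  have hr1 : r < 1 := max_lt hra1 hrb1
  have hmono : ∀ (C' r' : ℝ), C' ≤ C → r' ≤ r → 0 ≤ r' → ∀ k : ℕ,
      C' * r' ^ k ≤ C * r ^ k := by
    intro C' r' hC' hr' hr'0 k
    apply mul_le_mul hC' (pow_le_pow_left₀ hr'0 hr' k) (pow_nonneg hr'0 k)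
      (le_trans (le_of_lt hCa) (le_max_left _ _))
  have hbda : ∀ j : ℤ, ∃ m : ℤ, |Λ * a * θ ^ j - (m:ℝ)| ≤ C * r ^ j.natAbs := by
    intro j; obtain ⟨m, hm⟩ := hbda0 j
    exact ⟨m, le_trans hm (hmono Ca ra (le_max_left _ _) (le_max_left _ _) hra0 _)⟩
  have hbdb : ∀ j : ℤ, ∃ m : ℤ, |Λ * b * θ ^ j - (m:ℝ)| ≤ C * r ^ j.natAbs := by
    intro j; obtain ⟨m, hm⟩ := hbdb0 j
    exact ⟨m, le_trans hm (hmono Cb rb (le_max_right _ _) (le_max_right _ _) hrb0 _)⟩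
  set ga : ℤ → ℝ := fun j => Real.cos (2 * π * Λ * a * θ ^ j) with hgadef
  set gb : ℤ → ℝ := fun j => Real.cos (2 * π * Λ * b * θ ^ j) with hgbdef
  set F : ℕ → ℤ → ℝ := fun n j => Real.cos (2 * π * Λ * (a + b * θ ^ n) * θ ^ j) with hFdef
  set A : ℝ := ∏' j : ℤ, ga j with hAdef
  set B : ℝ := ∏' j : ℤ, gb j with hBdef
  have hga1 : ∀ j : ℤ, |ga j| ≤ 1 := fun j => Real.abs_cos_le_one _
  have hgb1 : ∀ j : ℤ, |gb j| ≤ 1 := fun j => Real.abs_cos_le_one _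
  have hF1 : ∀ n (j : ℤ), |F n j| ≤ 1 := fun n j => Real.abs_cos_le_one _
  have hgam : ∀ s : Set ℤ, Multipliable (fun j : ↥s => ga (j:ℤ)) :=
    fun s => cosMultSub hr0 hr1 hbda s
  have hgbm : ∀ s : Set ℤ, Multipliable (fun j : ↥s => gb (j:ℤ)) :=
    fun s => cosMultSub hr0 hr1 hbdb s
  have hFm : ∀ n (s : Set ℤ), Multipliable (fun j : ↥s => F n (j:ℤ)) := by
    intro n s
    have hmem : a + b * θ ^ n ∈ Algebra.adjoin ℤ {θ} :=
      add_mem ha (mul_mem hb (pow_mem (Algebra.self_mem_adjoin_singleton ℤ θ) n))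
    obtain ⟨Cn, rn, hCn, hrn0, hrn1, hrnθ, hbdn⟩ := pisotDecay' θ hθ (mul_mem hΛ hmem)
    exact cosMultSub hrn0 hrn1 hbdn s
  have harg : ∀ (n : ℕ) (j : ℤ), 2 * π * Λ * (a + b * θ ^ n) * θ ^ j
      = 2 * π * Λ * a * θ ^ j + 2 * π * (Λ * b * θ ^ ((n:ℤ) + j)) := by
    intro n j
    rw [zpow_add₀ hθne, zpow_natCast]
    ring
  have hFeqA : ∀ (n : ℕ) (j : ℤ), F n j
      = Real.cos (2 * π * Λ * a * θ ^ j + 2 * π * (Λ * b * θ ^ ((n:ℤ) + j))) :=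
    fun n j => congrArg Real.cos (harg n j)
  have hFeqB : ∀ (n : ℕ) (j : ℤ), F n j
      = Real.cos (2 * π * Λ * b * θ ^ ((n:ℤ) + j) + 2 * π * (Λ * a * θ ^ j)) :=
    fun n j => (hFeqA n j).trans (congrArg Real.cos (by ring))
  set D : ℝ := 2 * π * C * (1 - r)⁻¹ with hDdef
  have hir : (0:ℝ) ≤ (1 - r)⁻¹ := by
    apply inv_nonneg.2; linarith
  have hD0 : 0 ≤ D := by positivity
  have hd : ∀ n : ℕ, dist (∏' j : ℤ, F n j) (A * B)
      ≤ 2 * D * r ^ (n - n / 2) + 2 * D * r ^ (n / 2) := by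
    intro n
    set hh : ℕ := n / 2 with hhdef
    set kk : ℕ := n - n / 2 with kkdef
    have hhk : hh + kk = n := by omega
    set S : Set ℤ := Set.Ici (-(hh:ℤ)) with hSdef
    have hSc : Sᶜ = Set.Iio (-(hh:ℤ)) := Set.compl_Ici
    -- Est1 : on S, F n vs ga
    have hEst1 : |(∏' j : ↥S, F n (j:ℤ)) - ∏' j : ↥S, ga (j:ℤ)|
        ≤ (2 * π * (C * r ^ kk)) * (1 - r)⁻¹ := by
      apply estBlock (eIci (-(hh:ℤ))) _ _ (fun j => hF1 n _) (fun j => hga1 _)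
        (hFm n S) (hgam S) hr0 hr1
      intro i
      have hcoe : ((eIci (-(hh:ℤ)) i : ↥S) : ℤ) = -(hh:ℤ) + i := rfl
      rw [hcoe]
      obtain ⟨m, hm⟩ := hbdb ((n:ℤ) + (-(hh:ℤ) + i))
      have hna : ((n:ℤ) + (-(hh:ℤ) + i)).natAbs = kk + i := by omega
      rw [hna] at hm
      calc |F n (-(hh:ℤ) + i) - ga (-(hh:ℤ) + i)|
          ≤ 2 * π * (C * r ^ (kk + i)) := by
            rw [hFeqA n (-(hh:ℤ) + i), hgadef]
            exact cosShiftNear _ m hm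
        _ = 2 * π * (C * r ^ kk) * r ^ i := by rw [pow_add]; ring
    -- Tail A : on Sᶜ, ga vs 1
    have hTailA : |(∏' j : ↥(Set.Iio (-(hh:ℤ))), ga (j:ℤ)) - 1|
        ≤ (2 * π * (C * r ^ hh)) * (1 - r)⁻¹ := by
      have h1 : |(∏' j : ↥(Set.Iio (-(hh:ℤ))), ga (j:ℤ)) - ∏' _ : ↥(Set.Iio (-(hh:ℤ))), (1:ℝ)|
          ≤ (2 * π * (C * r ^ hh)) * (1 - r)⁻¹ := by
        apply estBlock (eIio (-(hh:ℤ))) _ _ (fun j => hga1 _) (fun j => by norm_num)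
          (hgam _) multipliable_one hr0 hr1
        intro i
        have hcoe : ((eIio (-(hh:ℤ)) i : ↥(Set.Iio (-(hh:ℤ)))) : ℤ) = -(hh:ℤ) - 1 - i := rfl
        rw [hcoe]
        obtain ⟨m, hm⟩ := hbda (-(hh:ℤ) - 1 - i)
        have hna : (-(hh:ℤ) - 1 - i).natAbs = hh + 1 + i := by omega
        rw [hna] at hm
        calc |ga (-(hh:ℤ) - 1 - i) - 1|
            ≤ 2 * π * (C * r ^ (hh + 1 + i)) := by
              rw [hgadef]
              have hstep := cosOneSub hbda (-(hh:ℤ) - 1 - i)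
              rw [hna] at hstep
              exact hstep
          _ ≤ 2 * π * (C * r ^ hh) * r ^ i := by
              have : r ^ (hh + 1 + i) ≤ r ^ (hh + i) :=
                pow_le_pow_of_le_one hr0 (le_of_lt hr1) (by omega)
              calc 2 * π * (C * r ^ (hh + 1 + i)) ≤ 2 * π * (C * r ^ (hh + i)) := by
                    apply mul_le_mul_of_nonneg_left _ (by positivity)
                    exact mul_le_mul_of_nonneg_left this (le_of_lt hC)
                _ = 2 * π * (C * r ^ hh) * r ^ i := by rw [pow_add]; ring
      rwa [tprod_one] at h1
    -- Est2 and Tail B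
    have hknk : (kk:ℤ) - (n:ℤ) = -(hh:ℤ) := by omega
    have hPBeq : (∏' j : ↥(Set.Iio (-(hh:ℤ))), F n (j:ℤ))
        = ∏' i : ↥(Set.Iio ((kk:ℤ))), F n ((i:ℤ) - (n:ℤ)) := by
      rw [← Equiv.tprod_eq (eShift (n:ℤ) (kk:ℤ) (-(hh:ℤ)) hknk)
        (fun j : ↥(Set.Iio (-(hh:ℤ))) => F n (j:ℤ))]
      exact tprod_congr fun i => rfl
    have hFshm : Multipliable (fun i : ↥(Set.Iio ((kk:ℤ))) => F n ((i:ℤ) - (n:ℤ))) := by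
      have h2 := (Equiv.multipliable_iff (eShift (n:ℤ) (kk:ℤ) (-(hh:ℤ)) hknk)).2
        (hFm n (Set.Iio (-(hh:ℤ))))
      exact h2.congr fun i => rfl
    have hEst2 : |(∏' i : ↥(Set.Iio ((kk:ℤ))), F n ((i:ℤ) - (n:ℤ)))
        - ∏' i : ↥(Set.Iio ((kk:ℤ))), gb (i:ℤ)| ≤ (2 * π * (C * r ^ hh)) * (1 - r)⁻¹ := by
      apply estBlock (eIio ((kk:ℤ))) _ _ (fun j => hF1 n _) (fun j => hgb1 _)
        hFshm (hgbm _) hr0 hr1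
      intro i
      have hcoe : ((eIio ((kk:ℤ)) i : ↥(Set.Iio ((kk:ℤ)))) : ℤ) = (kk:ℤ) - 1 - i := rfl
      rw [hcoe]
      obtain ⟨m, hm⟩ := hbda ((kk:ℤ) - 1 - i - n)
      have hna : ((kk:ℤ) - 1 - i - n).natAbs = hh + 1 + i := by omega
      rw [hna] at hm
      calc |F n ((kk:ℤ) - 1 - i - n) - gb ((kk:ℤ) - 1 - i)|
          ≤ 2 * π * (C * r ^ (hh + 1 + i)) := by
            have hE : (n:ℤ) + ((kk:ℤ) - 1 - i - n) = (kk:ℤ) - 1 - i := by ring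
            have h5 : F n ((kk:ℤ) - 1 - i - n)
                = Real.cos (2 * π * Λ * b * θ ^ ((kk:ℤ) - 1 - i)
                  + 2 * π * (Λ * a * θ ^ ((kk:ℤ) - 1 - i - n))) := by
              rw [hFeqB n ((kk:ℤ) - 1 - i - n), hE]
            rw [h5, hgbdef]
            exact cosShiftNear _ m hm
        _ ≤ 2 * π * (C * r ^ hh) * r ^ i := by
            have h6 : r ^ (hh + 1 + i) ≤ r ^ (hh + i) :=
              pow_le_pow_of_le_one hr0 (le_of_lt hr1) (by omega)
            calc 2 * π * (C * r ^ (hh + 1 + i)) ≤ 2 * π * (C * r ^ (hh + i)) := by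
                  apply mul_le_mul_of_nonneg_left _ (by positivity)
                  exact mul_le_mul_of_nonneg_left h6 (le_of_lt hC)
              _ = 2 * π * (C * r ^ hh) * r ^ i := by rw [pow_add]; ring
    have hTailB : |(∏' j : ↥(Set.Ici ((kk:ℤ))), gb (j:ℤ)) - 1|
        ≤ (2 * π * (C * r ^ kk)) * (1 - r)⁻¹ := by
      have h1 : |(∏' j : ↥(Set.Ici ((kk:ℤ))), gb (j:ℤ)) - ∏' _ : ↥(Set.Ici ((kk:ℤ))), (1:ℝ)|
          ≤ (2 * π * (C * r ^ kk)) * (1 - r)⁻¹ := by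
        apply estBlock (eIci ((kk:ℤ))) _ _ (fun j => hgb1 _) (fun j => by norm_num)
          (hgbm _) multipliable_one hr0 hr1
        intro i
        have hcoe : ((eIci ((kk:ℤ)) i : ↥(Set.Ici ((kk:ℤ)))) : ℤ) = (kk:ℤ) + i := rfl
        rw [hcoe]
        have hna : ((kk:ℤ) + i).natAbs = kk + i := by omega
        have hstep := cosOneSub hbdb ((kk:ℤ) + i)
        rw [hna] at hstep
        calc |gb ((kk:ℤ) + i) - 1| ≤ 2 * π * (C * r ^ (kk + i)) := hstep
          _ = 2 * π * (C * r ^ kk) * r ^ i := by rw [pow_add]; ring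
      rwa [tprod_one] at h1
    -- assembly
    have hsplitF : (∏' j : ↥S, F n (j:ℤ)) * (∏' j : ↥Sᶜ, F n (j:ℤ)) = ∏' j : ℤ, F n j :=
      Multipliable.tprod_mul_tprod_compl (hFm n S) (hFm n Sᶜ)
    have hsplitA : (∏' j : ↥S, ga (j:ℤ)) * (∏' j : ↥Sᶜ, ga (j:ℤ)) = A :=
      Multipliable.tprod_mul_tprod_compl (hgam S) (hgam Sᶜ)
    have hsplitB : (∏' j : ↥(Set.Iio ((kk:ℤ))), gb (j:ℤ))
        * (∏' j : ↥(Set.Iio ((kk:ℤ)))ᶜ, gb (j:ℤ)) = B :=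
      Multipliable.tprod_mul_tprod_compl (hgbm _) (hgbm _)
    rw [hSc] at hsplitF hsplitA
    rw [Set.compl_Iio] at hsplitB
    set PA : ℝ := ∏' j : ↥S, F n (j:ℤ) with hPA
    set QA : ℝ := ∏' j : ↥(Set.Iio (-(hh:ℤ))), F n (j:ℤ) with hQA
    set P1 : ℝ := ∏' j : ↥S, ga (j:ℤ) with hP1
    set P2 : ℝ := ∏' j : ↥(Set.Iio (-(hh:ℤ))), ga (j:ℤ) with hP2
    set Q1 : ℝ := ∏' j : ↥(Set.Iio ((kk:ℤ))), gb (j:ℤ) with hQ1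
    set Q2 : ℝ := ∏' j : ↥(Set.Ici ((kk:ℤ))), gb (j:ℤ) with hQ2
    have hQA1 : |QA| ≤ 1 := absTprodLeOne _ (fun j => hF1 n _)
    have hP11 : |P1| ≤ 1 := absTprodLeOne _ (fun j => hga1 _)
    have hQ11 : |Q1| ≤ 1 := absTprodLeOne _ (fun j => hgb1 _)
    have hA1 : |A| ≤ 1 := by
      rw [hAdef]; exact absTprodLeOne _ (fun j => hga1 _)
    have hPAA : |PA - A| ≤ D * r ^ kk + D * r ^ hh := by
      have h7 : |P1 - A| ≤ D * r ^ hh := by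
        have h8 : P1 - A = P1 * (1 - P2) := by rw [← hsplitA]; ring
        calc |P1 - A| = |P1| * |1 - P2| := by rw [h8, abs_mul]
          _ ≤ 1 * |P2 - 1| := by
              rw [abs_sub_comm 1 P2]
              exact mul_le_mul_of_nonneg_right hP11 (abs_nonneg _)
          _ = |P2 - 1| := one_mul _
          _ ≤ (2 * π * (C * r ^ hh)) * (1 - r)⁻¹ := hTailA
          _ = D * r ^ hh := by rw [hDdef]; ring
      have h9 : |PA - P1| ≤ D * r ^ kk := by
        calc |PA - P1| ≤ (2 * π * (C * r ^ kk)) * (1 - r)⁻¹ := hEst1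
          _ = D * r ^ kk := by rw [hDdef]; ring
      calc |PA - A| ≤ |PA - P1| + |P1 - A| := abs_sub_le _ _ _
        _ ≤ D * r ^ kk + D * r ^ hh := add_le_add h9 h7
    have hQAB : |QA - B| ≤ D * r ^ hh + D * r ^ kk := by
      have h7 : |Q1 - B| ≤ D * r ^ kk := by
        have h8 : Q1 - B = Q1 * (1 - Q2) := by rw [← hsplitB]; ring
        calc |Q1 - B| = |Q1| * |1 - Q2| := by rw [h8, abs_mul]
          _ ≤ 1 * |Q2 - 1| := by
              rw [abs_sub_comm 1 Q2]
              exact mul_le_mul_of_nonneg_right hQ11 (abs_nonneg _)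
          _ = |Q2 - 1| := one_mul _
          _ ≤ (2 * π * (C * r ^ kk)) * (1 - r)⁻¹ := hTailB
          _ = D * r ^ kk := by rw [hDdef]; ring
      have h9 : |QA - Q1| ≤ D * r ^ hh := by
        have h5 : QA = ∏' i : ↥(Set.Iio ((kk:ℤ))), F n ((i:ℤ) - (n:ℤ)) := hPBeq
        have h6 : |(∏' i : ↥(Set.Iio ((kk:ℤ))), F n ((i:ℤ) - (n:ℤ))) - Q1|
            ≤ (2 * π * (C * r ^ hh)) * (1 - r)⁻¹ := hEst2
        calc |QA - Q1| = |(∏' i : ↥(Set.Iio ((kk:ℤ))), F n ((i:ℤ) - (n:ℤ))) - Q1| := by rw [h5]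
          _ ≤ (2 * π * (C * r ^ hh)) * (1 - r)⁻¹ := h6
          _ = D * r ^ hh := by rw [hDdef]; ring
      calc |QA - B| ≤ |QA - Q1| + |Q1 - B| := abs_sub_le _ _ _
        _ ≤ D * r ^ hh + D * r ^ kk := add_le_add h9 h7
    have hDk : 0 ≤ D * r ^ kk + D * r ^ hh := by positivity
    rw [Real.dist_eq, ← hsplitF]
    have hiden : PA * QA - A * B = (PA - A) * QA + A * (QA - B) := by ring
    calc |PA * QA - A * B| = |(PA - A) * QA + A * (QA - B)| := by rw [hiden]
      _ ≤ |(PA - A) * QA| + |A * (QA - B)| := abs_add_le _ _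
      _ = |PA - A| * |QA| + |A| * |QA - B| := by rw [abs_mul, abs_mul]
      _ ≤ (D * r ^ kk + D * r ^ hh) * 1 + 1 * (D * r ^ hh + D * r ^ kk) := by
          apply add_le_add
          · exact mul_le_mul hPAA hQA1 (abs_nonneg _) hDk
          · exact mul_le_mul hA1 hQAB (abs_nonneg _) zero_le_one
      _ = 2 * D * r ^ kk + 2 * D * r ^ hh := by ring
  -- conclusion
  have hb1 : Tendsto (fun n : ℕ => r ^ (n - n / 2)) atTop (𝓝 0) :=
    (tendsto_pow_atTop_nhds_zero_of_lt_one hr0 hr1).comp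
      (tendsto_atTop_atTop.2 fun M => ⟨2 * M + 2, fun n hn => by omega⟩)
  have hb2 : Tendsto (fun n : ℕ => r ^ (n / 2)) atTop (𝓝 0) :=
    (tendsto_pow_atTop_nhds_zero_of_lt_one hr0 hr1).comp
      (tendsto_atTop_atTop.2 fun M => ⟨2 * M, fun n hn => by omega⟩)
  have hbnd : Tendsto (fun n : ℕ => 2 * D * r ^ (n - n / 2) + 2 * D * r ^ (n / 2))
      atTop (𝓝 0) := by
    have h10 := (hb1.const_mul (2 * D)).add (hb2.const_mul (2 * D))
    simpa using h10
  have final : Tendsto (fun n : ℕ => ∏' j : ℤ, F n j) atTop (𝓝 (A * B)) := by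
    rw [tendsto_iff_dist_tendsto_zero]
    exact squeeze_zero (fun n => dist_nonneg) hd hbnd
  have hfun : (fun n : ℕ => ∏' j : ℤ, F n j)
      = fun n : ℕ => ∏' j : ℤ, Real.cos (2 * π * Λ * (a + b * θ ^ n) * θ ^ j) := by
    funext n
    simp only [hFdef]
  rwa [hfun] at final
end

section
/- Let θ > 1 be a Pisot number and ξ ∈ ℚ(θ). Then the sequence {‖ξ θ^n‖ : n ∈ ℕ} of distances to the nearest integer has only finitely many limit points. -/
open Real Filter Set MeasureTheory Polynomial ENNReal Topology

lemma myIntDist_le (x : ℝ) (m : ℤ) : intDist x ≤ |x - m| := round_le x m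

lemma myIntDist_lipschitz (x y : ℝ) : |intDist x - intDist y| ≤ |x - y| := by
  have h : ∀ a b : ℝ, intDist a - intDist b ≤ |a - b| := by
    intro a b
    have h1 : intDist a ≤ |a - round b| := myIntDist_le a (round b)
    have h2 : |a - round b| ≤ |a - b| + |b - round b| := by
      have := abs_sub_abs_le_abs_sub (a - round b) (b - round b)
      calc |a - (round b : ℝ)| = |(a - b) + (b - round b)| := by ring_nf
        _ ≤ |a - b| + |b - round b| := abs_add_le _ _
    simp only [intDist] at *
    linarith
  rw [abs_sub_le_iff]
  exact ⟨by simpa [abs_sub_comm x y] using h x y, by simpa [abs_sub_comm y x] using h y x⟩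

lemma myIntDist_add_int (x : ℝ) (m : ℤ) : intDist (x + m) = intDist x := by
  simp only [intDist, round_add_intCast]
  push_cast
  ring_nf

lemma cluster_subset_of_tendsto {f g : ℕ → ℝ} {S : Set ℝ} (hS : S.Finite)
    (hg : ∀ n, g n ∈ S) (h : Tendsto (fun n => f n - g n) atTop (𝓝 0)) :
    {a : ℝ | MapClusterPt a atTop f} ⊆ S := by
  intro a ha
  by_contra haS
  obtain ⟨ε, hε, hball⟩ := Metric.isOpen_iff.1 hS.isClosed.isOpen_compl a haS
  have h1 : ∀ᶠ n in atTop, |f n - g n| < ε / 2 := by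
    have := Metric.tendsto_nhds.1 h (ε / 2) (by positivity)
    simpa [Real.dist_eq] using this
  have h2 : ∃ᶠ n in atTop, |f n - a| < ε / 2 := by
    have := (mapClusterPt_iff_frequently.1 ha) (Metric.ball a (ε / 2))
      (Metric.ball_mem_nhds a (by positivity))
    simpa [Metric.mem_ball, Real.dist_eq] using this
  obtain ⟨n, hn2, hn1⟩ := (h2.and_eventually h1).exists
  have : g n ∈ Metric.ball a ε := by
    rw [Metric.mem_ball, Real.dist_eq]
    have : |g n - a| ≤ |g n - f n| + |f n - a| := by
      calc |g n - a| = |(g n - f n) + (f n - a)| := by ring_nf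
        _ ≤ _ := abs_add_le _ _
    rw [abs_sub_comm] at hn1
    linarith
  exact hball this (hg n)

set_option maxHeartbeats 1000000 in
open IntermediateField in
lemma main_approx (θ : ℝ) (hθ : IsPisot θ) (ξ : ℝ) (hξ : ξ ∈ Algebra.adjoin ℚ {θ}) :
    ∃ (Q : ℤ), 0 < Q ∧ ∃ t : ℕ → ℤ,
      Tendsto (fun n : ℕ => ξ * θ ^ n - (t n : ℝ) / Q) atTop (𝓝 0) := by
  classical
  obtain ⟨hθ1, hint, hconj⟩ := hθ
  have hθQ : IsIntegral ℚ θ := hint.tower_top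
  haveI : FiniteDimensional ℚ ℚ⟮θ⟯ := IntermediateField.adjoin.finiteDimensional hθQ
  have hξK : ξ ∈ ℚ⟮θ⟯ := by
    rw [← IntermediateField.adjoin_simple_toSubalgebra_of_isAlgebraic hθQ.isAlgebraic] at hξ
    exact hξ
  set K := ℚ⟮θ⟯
  set ξK : K := ⟨ξ, hξK⟩ with hξKdef
  set θK : K := AdjoinSimple.gen ℚ θ with hθKdef
  have hmapθ : algebraMap K ℝ θK = θ := IntermediateField.AdjoinSimple.algebraMap_gen ℚ θ
  have hθKint : IsIntegral ℤ θK := by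
    have hinj : Function.Injective (algebraMap K ℝ) := (algebraMap K ℝ).injective
    rw [← isIntegral_algebraMap_iff hinj, hmapθ]
    exact hint
  have hξalg : IsAlgebraic ℤ ξK :=
    (IsFractionRing.isAlgebraic_iff ℤ ℚ K).2 (Algebra.IsAlgebraic.isAlgebraic ξK)
  obtain ⟨x, q, hq0, hqx⟩ : ∃ (x : integralClosure ℤ K) (q : ℤ), q ≠ 0 ∧
      algebraMap ℤ K q * ξK = x := by
    obtain ⟨q, hq0, hqi⟩ := hξalg.exists_integral_multiple
    exact ⟨⟨q • ξK, hqi⟩, q, hq0, (Algebra.smul_def q ξK).symm⟩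
  set Q : ℤ := |q| with hQdef
  have hQ0 : 0 < Q := abs_pos.2 hq0
  have hQξ : IsIntegral ℤ ((Q : K) * ξK) := by
    have hx : IsIntegral ℤ (algebraMap ℤ K q * ξK) := by rw [hqx]; exact x.2
    rcases abs_choice q with h | h
    · rw [hQdef, h]; exact_mod_cast hx
    · rw [hQdef, h]; push_cast; rw [neg_mul]
      exact IsIntegral.neg (by exact_mod_cast hx)
  refine ⟨Q, hQ0, ?_⟩
  -- the traces
  have htr : ∀ n : ℕ, IsIntegral ℤ (Algebra.trace ℚ K ((Q : K) * ξK * θK ^ n)) :=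
    fun n => Algebra.isIntegral_trace (hQξ.mul (hθKint.pow n))
  choose t ht using fun n => IsIntegrallyClosed.isIntegral_iff.1 (htr n)
  -- the real embedding
  let σ₀ : K →ₐ[ℚ] ℂ := (Complex.ofRealAm.restrictScalars ℚ).comp (IntermediateField.val K)
  have hσ₀ : ∀ z : K, σ₀ z = ((z : ℝ) : ℂ) := fun z => rfl
  -- trace as a sum over embeddings
  have key : ∀ n : ℕ, ((t n : ℂ)) = ∑ σ : K →ₐ[ℚ] ℂ, σ ((Q : K) * ξK * θK ^ n) := by
    intro n
    have h := trace_eq_sum_embeddings (K := ℚ) (E := ℂ) (x := (Q : K) * ξK * θK ^ n)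
    rw [← ht n] at h
    simpa using h
  -- conjugate bound
  have hroot : ∀ σ : K →ₐ[ℚ] ℂ, σ ≠ σ₀ → ‖σ θK‖ < 1 := by
    intro σ hσ
    apply hconj
    · have h0 : aeval θK (minpoly ℚ θ) = 0 := by
        rw [← IntermediateField.minpoly_gen ℚ θ]; exact minpoly.aeval _ _
      have h1 : aeval (σ θK) (minpoly ℚ θ) = 0 := by
        rw [aeval_algHom_apply, h0, map_zero]
      have h2 : minpoly ℚ θ = (minpoly ℤ θ).map (algebraMap ℤ ℚ) :=
        minpoly.isIntegrallyClosed_eq_field_fractions' ℚ hint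
      rw [h2, aeval_map_algebraMap] at h1
      exact h1
    · intro hcontra
      apply hσ
      apply IntermediateField.adjoin_algHom_ext
      intro y hy
      rcases Set.mem_singleton_iff.1 hy with rfl
      have hgen : (⟨y, IntermediateField.subset_adjoin ℚ {y} rfl⟩ : ℚ⟮y⟯) = θK := rfl
      rw [hgen]
      exact hcontra
  -- the tail sum tends to zero
  have htail : Tendsto (fun n : ℕ =>
      ∑ σ ∈ Finset.univ.erase σ₀, σ ((Q : K) * ξK) * (σ θK) ^ n) atTop (𝓝 0) := by
    have : Tendsto (fun n : ℕ => ∑ σ ∈ Finset.univ.erase σ₀,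
        σ ((Q : K) * ξK) * (σ θK) ^ n) atTop (𝓝 (∑ σ ∈ Finset.univ.erase σ₀, 0)) := by
      apply tendsto_finset_sum
      intro σ hσ
      have hlt : ‖σ θK‖ < 1 := hroot σ (Finset.ne_of_mem_erase hσ)
      simpa using (tendsto_pow_atTop_nhds_zero_of_norm_lt_one hlt).const_mul
        (σ ((Q : K) * ξK))
    simpa using this
  -- assemble
  have hC : Tendsto (fun n : ℕ => (((Q : ℝ) * ξ * θ ^ n - (t n : ℝ) : ℝ) : ℂ)) atTop (𝓝 0) := by
    have heq : (fun n : ℕ => (((Q : ℝ) * ξ * θ ^ n - (t n : ℝ) : ℝ) : ℂ)) =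
        fun n : ℕ => -(∑ σ ∈ Finset.univ.erase σ₀, σ ((Q : K) * ξK) * (σ θK) ^ n) := by
      funext n
      have hsplit := key n
      rw [← Finset.add_sum_erase _ _ (Finset.mem_univ σ₀)] at hsplit
      have hσ₀val : σ₀ ((Q : K) * ξK * θK ^ n) = (((Q : ℝ) * ξ * θ ^ n : ℝ) : ℂ) := by
        rw [hσ₀]
        norm_cast
      have hsum : ∀ σ : ↥K →ₐ[ℚ] ℂ, σ ((Q : K) * ξK * θK ^ n) =
          σ ((Q : K) * ξK) * (σ θK) ^ n := fun σ => by rw [map_mul, map_pow]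
      rw [Finset.sum_congr rfl (fun σ _ => hsum σ), hσ₀val] at hsplit
      push_cast at hsplit ⊢
      linear_combination -hsplit
    rw [heq]
    simpa using htail.neg
  have hmainR : Tendsto (fun n : ℕ => (Q : ℝ) * ξ * θ ^ n - (t n : ℝ)) atTop (𝓝 0) := by
    have h2 : Tendsto (fun n : ℕ =>
        ((((Q : ℝ) * ξ * θ ^ n - (t n : ℝ) : ℝ) : ℂ)).re) atTop (𝓝 (0 : ℂ).re) :=
      (Complex.continuous_re.tendsto 0).comp hC
    simpa only [Complex.ofReal_re, Complex.zero_re] using h2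
  refine ⟨t, ?_⟩
  have hQne : (Q : ℝ) ≠ 0 := Int.cast_ne_zero.2 hQ0.ne'
  have h3 := hmainR.const_mul ((Q : ℝ)⁻¹)
  rw [mul_zero] at h3
  have heq2 : (fun n : ℕ => ξ * θ ^ n - (t n : ℝ) / Q) =
      fun n : ℕ => (Q : ℝ)⁻¹ * ((Q : ℝ) * ξ * θ ^ n - (t n : ℝ)) := by
    funext n
    field_simp
  rw [heq2]
  exact h3

theorem stmt17 (θ : ℝ) (hθ : IsPisot θ) (ξ : ℝ) (hξ : ξ ∈ Algebra.adjoin ℚ {θ}) :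
    {a : ℝ | MapClusterPt a atTop fun n : ℕ => intDist (ξ * θ ^ n)}.Finite := by
  obtain ⟨Q, hQ0, t, htend⟩ := main_approx θ hθ ξ hξ
  have hQR : (0 : ℝ) < (Q : ℝ) := by exact_mod_cast hQ0
  set g : ℕ → ℝ := fun n => intDist (((t n % Q : ℤ) : ℝ) / Q) with hg
  have hS : ((fun j : ℤ => intDist ((j : ℝ) / Q)) '' (Set.Icc 0 Q)).Finite :=
    (Set.finite_Icc 0 Q).image _
  refine hS.subset (cluster_subset_of_tendsto (g := g) hS (fun n => ?_) ?_)
  · exact Set.mem_image_of_mem _ (Set.mem_Icc.2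
      ⟨Int.emod_nonneg _ hQ0.ne', (Int.emod_lt_of_pos _ hQ0).le⟩)
  · have hgalt : ∀ n, g n = intDist ((t n : ℝ) / Q) := by
      intro n
      show intDist (((t n % Q : ℤ) : ℝ) / Q) = _
      rw [← myIntDist_add_int (((t n % Q : ℤ) : ℝ) / Q) (t n / Q)]
      congr 1
      have hid := Int.mul_ediv_add_emod (t n) Q
      have h2 : ((Q * (t n / Q) + t n % Q : ℤ) : ℝ) = (t n : ℝ) := by rw [hid]
      push_cast at h2
      field_simp
      linarith
    apply squeeze_zero_norm (a := fun n => |ξ * θ ^ n - (t n : ℝ) / Q|)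
    · intro n
      rw [hgalt n, Real.norm_eq_abs]
      exact myIntDist_lipschitz _ _
    · simpa using htend.abs
end

section
/- Let θ > 1 be a Pisot number with θ ≠ 2 and suppose μ̂_θ(t) ↛ 0 as t → +∞ over the reals. Then also μ̂_θ(n) ↛ 0 as n → +∞ over the integers. -/
open Real Filter Set MeasureTheory Polynomial ENNReal Topology

namespace Stmt18Aux

/-- cos is 1-Lipschitz. -/
lemma cos_lip (a b : ℝ) : |Real.cos a - Real.cos b| ≤ |a - b| := by
  rw [Real.cos_sub_cos]
  rw [abs_mul, abs_mul, abs_neg]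
  have h1 : |Real.sin ((a + b) / 2)| ≤ 1 := abs_sin_le_one _
  have h2 : |Real.sin ((a - b) / 2)| ≤ |(a - b) / 2| := Real.abs_sin_le_abs
  calc |(2:ℝ)| * |Real.sin ((a + b) / 2)| * |Real.sin ((a - b) / 2)|
      ≤ |(2:ℝ)| * 1 * |(a - b) / 2| := by
        apply mul_le_mul (by apply mul_le_mul_of_nonneg_left h1 (abs_nonneg _)) h2
          (abs_nonneg _) (by positivity)
    _ = |a - b| := by rw [abs_div]; rw [abs_of_pos (by norm_num : (0:ℝ) < 2)]; norm_num; ring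

/-- product difference bound for 1-bounded factors -/
lemma prod_sub_prod_le (n : ℕ) (f g : ℕ → ℝ) (hf : ∀ i, |f i| ≤ 1) (hg : ∀ i, |g i| ≤ 1) :
    |∏ i ∈ Finset.range n, f i - ∏ i ∈ Finset.range n, g i|
      ≤ ∑ i ∈ Finset.range n, |f i - g i| := by
  induction n with
  | zero => simp
  | succ n ih =>
    rw [Finset.prod_range_succ, Finset.prod_range_succ, Finset.sum_range_succ]
    have hPf : |∏ i ∈ Finset.range n, f i| ≤ 1 := by
      rw [Finset.abs_prod]
      exact Finset.prod_le_one (fun i _ => abs_nonneg _) (fun i _ => hf i)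
    have hgn : |g n| ≤ 1 := hg n
    have key : |(∏ i ∈ Finset.range n, f i) * f n - (∏ i ∈ Finset.range n, g i) * g n|
        ≤ |∏ i ∈ Finset.range n, f i| * |f n - g n|
          + |g n| * |∏ i ∈ Finset.range n, f i - ∏ i ∈ Finset.range n, g i| := by
      have : (∏ i ∈ Finset.range n, f i) * f n - (∏ i ∈ Finset.range n, g i) * g n
          = (∏ i ∈ Finset.range n, f i) * (f n - g n)
            + g n * (∏ i ∈ Finset.range n, f i - ∏ i ∈ Finset.range n, g i) := by ring
      rw [this]
      exact (abs_add_le _ _).trans (by rw [abs_mul, abs_mul])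
    calc |(∏ i ∈ Finset.range n, f i) * f n - (∏ i ∈ Finset.range n, g i) * g n|
        ≤ |∏ i ∈ Finset.range n, f i| * |f n - g n|
          + |g n| * |∏ i ∈ Finset.range n, f i - ∏ i ∈ Finset.range n, g i| := key
      _ ≤ 1 * |f n - g n| + 1 * (∑ i ∈ Finset.range n, |f i - g i|) := by
          apply add_le_add
          · exact mul_le_mul_of_nonneg_right hPf (abs_nonneg _)
          · exact mul_le_mul hgn ih (abs_nonneg _) zero_le_one
      _ = (∑ i ∈ Finset.range n, |f i - g i|) + |f n - g n| := by ring

/-- one minus sum le prod of one minus -/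
lemma one_sub_sum_le_prod (n : ℕ) (a : ℕ → ℝ) (h0 : ∀ i < n, 0 ≤ a i) (h1 : ∀ i < n, a i ≤ 1) :
    1 - ∑ i ∈ Finset.range n, a i ≤ ∏ i ∈ Finset.range n, (1 - a i) := by
  induction n with
  | zero => simp
  | succ n ih =>
    have h0' : ∀ i < n, 0 ≤ a i := fun i hi => h0 i (Nat.lt_succ_of_lt hi)
    have h1' : ∀ i < n, a i ≤ 1 := fun i hi => h1 i (Nat.lt_succ_of_lt hi)
    have ih' := ih h0' h1'
    rw [Finset.prod_range_succ, Finset.sum_range_succ]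
    have hP : 0 ≤ ∏ i ∈ Finset.range n, (1 - a i) :=
      Finset.prod_nonneg (fun i hi => by linarith [h1' i (Finset.mem_range.mp hi)])
    have hS : 0 ≤ ∑ i ∈ Finset.range n, a i :=
      Finset.sum_nonneg (fun i hi => h0' i (Finset.mem_range.mp hi))
    nlinarith [h0 n (Nat.lt_succ_self n), h1 n (Nat.lt_succ_self n)]

/-- quadratic lower bound : 1 - cos t ≥ sin t ^2 / 2 -/
lemma sin_sq_le_two_mul_one_sub_cos (t : ℝ) : Real.sin t ^ 2 ≤ 2 * (1 - Real.cos t) := by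
  have h := Real.sin_sq_add_cos_sq t
  nlinarith [Real.neg_one_le_cos t, Real.cos_le_one t]

lemma two_delta_sq_le (δ : ℝ) (hδ : |δ| ≤ 1/2) : 2 * δ^2 ≤ 1 - Real.cos (π * δ) := by
  have hπ := Real.pi_gt_three
  have h1 : |π * δ| ≤ π / 2 := by
    rw [abs_mul, abs_of_pos Real.pi_pos]
    calc π * |δ| ≤ π * (1/2) := by nlinarith [abs_nonneg δ]
      _ = π / 2 := by ring
  have hJ : 2 / π * |π * δ| ≤ |Real.sin (π * δ)| := Real.mul_abs_le_abs_sin h1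
  have h2 : 2 / π * |π * δ| = 2 * |δ| := by
    rw [abs_mul, abs_of_pos Real.pi_pos]; field_simp
  have h3 : (2 * |δ|)^2 ≤ Real.sin (π * δ) ^ 2 := by
    rw [← sq_abs (Real.sin (π * δ))]
    apply pow_le_pow_left₀ (by positivity)
    rw [← h2]; exact hJ
  have h4 := sin_sq_le_two_mul_one_sub_cos (π * δ)
  have : (2 * |δ|)^2 = 4 * δ^2 := by rw [mul_pow, sq_abs]; ring
  nlinarith

/-- reflected tail sum -/
lemma sum_shift (g : ℕ → ℝ) (M₁ i : ℕ) (hi : M₁ ≤ i) :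
    ∑ k ∈ Finset.range (i - M₁ + 1), g (i - k) = ∑ j ∈ Finset.Ico M₁ (i+1), g j := by
  rw [Finset.sum_Ico_eq_sum_range]
  have hL : i + 1 - M₁ = i - M₁ + 1 := by omega
  rw [hL, ← Finset.sum_range_reflect (fun k => g (M₁ + k)) (i - M₁ + 1)]
  apply Finset.sum_congr rfl
  intro k hk
  have hk' := Finset.mem_range.mp hk
  congr 1
  omega

lemma sum_Ico_shift (f : ℕ → ℝ) (a b q : ℕ) :
    ∑ j ∈ Finset.Ico a b, f (j + q) = ∑ j ∈ Finset.Ico (a+q) (b+q), f j := by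
  rw [Finset.sum_Ico_eq_sum_range, Finset.sum_Ico_eq_sum_range]
  have hL : b + q - (a + q) = b - a := by omega
  rw [hL]
  apply Finset.sum_congr rfl
  intro k _
  congr 1
  omega

end Stmt18Aux

section Mu

variable {θ : ℝ} (hθ : 1 < θ)

include hθ in
lemma multipliable_fct (t : ℝ) :
    Multipliable (fun k : ℕ => Real.cos (2 * π * θ⁻¹ ^ k * t)) := by
  have hθ0 : (0:ℝ) < θ := lt_trans one_pos hθ
  have hr0 : 0 < θ⁻¹ := inv_pos.2 hθ0
  have hr1 : θ⁻¹ < 1 := inv_lt_one_of_one_lt₀ hθ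
  obtain ⟨n₀, hn₀⟩ : ∃ n₀ : ℕ, 2 * π * |t| * θ⁻¹ ^ n₀ ≤ 1 := by
    have htend : Tendsto (fun n : ℕ => 2 * π * |t| * θ⁻¹ ^ n) atTop (𝓝 0) := by
      simpa using (tendsto_pow_atTop_nhds_zero_of_lt_one hr0.le hr1).const_mul (2 * π * |t|)
    exact (htend.eventually (eventually_le_nhds (by norm_num : (0:ℝ) < 1))).exists
  apply Multipliable.comp_nat_add (k := n₀)
  set g : ℕ → ℝ := fun k => Real.cos (2 * π * θ⁻¹ ^ (k + n₀) * t) with hg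
  have harg : ∀ k : ℕ, |2 * π * θ⁻¹ ^ (k + n₀) * t| ≤ θ⁻¹ ^ k := by
    intro k
    have he : |2 * π * θ⁻¹ ^ (k + n₀) * t| = (2 * π * |t| * θ⁻¹ ^ n₀) * θ⁻¹ ^ k := by
      rw [abs_mul, abs_mul, abs_of_nonneg (by positivity : (0:ℝ) ≤ 2*π),
        abs_of_nonneg (by positivity : (0:ℝ) ≤ θ⁻¹ ^ (k + n₀)), pow_add]
      ring
    rw [he]
    exact mul_le_of_le_one_left (by positivity) hn₀
  have hrk1 : ∀ k : ℕ, θ⁻¹ ^ k ≤ 1 := fun k => pow_le_one₀ hr0.le hr1.le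
  have hglb : ∀ k : ℕ, 1 - θ⁻¹ ^ k / 2 ≤ g k := by
    intro k
    have h1 : 1 - (2 * π * θ⁻¹ ^ (k + n₀) * t) ^ 2 / 2 ≤ g k :=
      Real.one_sub_sq_div_two_le_cos
    have h2 : (2 * π * θ⁻¹ ^ (k + n₀) * t) ^ 2 ≤ θ⁻¹ ^ k := by
      calc (2 * π * θ⁻¹ ^ (k + n₀) * t) ^ 2 = |2 * π * θ⁻¹ ^ (k + n₀) * t| ^ 2 := (sq_abs _).symm
        _ ≤ (θ⁻¹ ^ k) ^ 2 := pow_le_pow_left₀ (abs_nonneg _) (harg k) 2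
        _ ≤ θ⁻¹ ^ k * 1 := by rw [sq]; exact mul_le_mul_of_nonneg_left (hrk1 k) (by positivity)
        _ = θ⁻¹ ^ k := mul_one _
    linarith
  have hgpos : ∀ k : ℕ, (1:ℝ)/2 ≤ g k := by
    intro k
    have := hglb k
    have := hrk1 k
    linarith
  have hgle1 : ∀ k : ℕ, g k ≤ 1 := fun k => Real.cos_le_one _
  have hlogbound : ∀ k : ℕ, |Real.log (g k)| ≤ θ⁻¹ ^ k := by
    intro k
    have hpos : 0 < g k := lt_of_lt_of_le (by norm_num) (hgpos k)
    have hln : Real.log (g k) ≤ 0 := Real.log_nonpos (by linarith [hgpos k]) (hgle1 k)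
    rw [abs_of_nonpos hln, ← Real.log_inv]
    have h1 : Real.log (g k)⁻¹ ≤ (g k)⁻¹ - 1 := Real.log_le_sub_one_of_pos (by positivity)
    have h2 : (g k)⁻¹ - 1 ≤ 2 * (1 - g k) := by
      rw [inv_eq_one_div, div_sub' (ne_of_gt hpos)]
      rw [div_le_iff₀ hpos]
      nlinarith [hgpos k, hgle1 k]
    have h3 : 2 * (1 - g k) ≤ θ⁻¹ ^ k := by
      have := hglb k; linarith
    linarith
  have hsum : Summable (fun k => Real.log (g k)) := by
    apply Summable.of_abs
    exact Summable.of_nonneg_of_le (fun k => abs_nonneg _) hlogbound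
      (summable_geometric_of_lt_one hr0.le hr1)
  have hgpos' : ∀ k, 0 < g k := fun k => lt_of_lt_of_le (by norm_num) (hgpos k)
  have heq : (Real.exp ∘ fun k => Real.log (g k)) = g :=
    funext fun k => Real.exp_log (hgpos' k)
  exact ⟨_, heq ▸ hsum.hasSum.rexp⟩

include hθ in
lemma limP (t : ℝ) :
    Tendsto (fun n => ∏ k ∈ Finset.range n, Real.cos (2 * π * θ⁻¹ ^ k * t)) atTop
      (𝓝 (muHat θ t)) := by
  rw [muHat]
  exact (multipliable_fct hθ t).hasProd.tendsto_prod_nat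

include hθ in
lemma abs_muHat_le_one (t : ℝ) : |muHat θ t| ≤ 1 := by
  have := (limP hθ t).abs
  apply le_of_tendsto this
  filter_upwards with n
  rw [Finset.abs_prod]
  exact Finset.prod_le_one (fun i _ => abs_nonneg _) (fun i _ => Real.abs_cos_le_one _)

include hθ in
lemma muHat_step (t : ℝ) : muHat θ t = Real.cos (2 * π * t) * muHat θ (θ⁻¹ * t) := by
  have h1 : Tendsto (fun n => ∏ k ∈ Finset.range (n+1), Real.cos (2 * π * θ⁻¹ ^ k * t)) atTop
      (𝓝 (muHat θ t)) := (limP hθ t).comp (tendsto_add_atTop_nat 1)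
  have h2 : (fun n => ∏ k ∈ Finset.range (n+1), Real.cos (2 * π * θ⁻¹ ^ k * t))
      = fun n => Real.cos (2 * π * t) *
          ∏ k ∈ Finset.range n, Real.cos (2 * π * θ⁻¹ ^ k * (θ⁻¹ * t)) := by
    funext n
    rw [Finset.prod_range_succ']
    have hA : ∏ k ∈ Finset.range n, Real.cos (2 * π * θ⁻¹ ^ (k+1) * t)
        = ∏ k ∈ Finset.range n, Real.cos (2 * π * θ⁻¹ ^ k * (θ⁻¹ * t)) :=
      Finset.prod_congr rfl (fun k _ => by rw [pow_succ]; ring_nf)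
    have e0 : Real.cos (2 * π * θ⁻¹ ^ 0 * t) = Real.cos (2 * π * t) := by norm_num
    rw [hA, e0, mul_comm]
  rw [h2] at h1
  have h3 : Tendsto (fun n => Real.cos (2 * π * t) *
      ∏ k ∈ Finset.range n, Real.cos (2 * π * θ⁻¹ ^ k * (θ⁻¹ * t))) atTop
      (𝓝 (Real.cos (2 * π * t) * muHat θ (θ⁻¹ * t))) :=
    (limP hθ (θ⁻¹ * t)).const_mul _
  exact tendsto_nhds_unique h1 h3

include hθ in
lemma muHat_iter (t : ℝ) (n : ℕ) :
    muHat θ t = (∏ k ∈ Finset.range n, Real.cos (2 * π * θ⁻¹ ^ k * t)) *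
      muHat θ (θ⁻¹ ^ n * t) := by
  induction n generalizing t with
  | zero => simp
  | succ n ih =>
    rw [muHat_step hθ t, ih (θ⁻¹ * t)]
    have hA : ∏ k ∈ Finset.range n, Real.cos (2 * π * θ⁻¹ ^ k * (θ⁻¹ * t))
        = ∏ k ∈ Finset.range n, Real.cos (2 * π * θ⁻¹ ^ (k+1) * t) :=
      Finset.prod_congr rfl (fun k _ => by rw [pow_succ]; ring_nf)
    have he : θ⁻¹ ^ n * (θ⁻¹ * t) = θ⁻¹ ^ (n+1) * t := by rw [pow_succ]; ring
    have e0 : Real.cos (2 * π * θ⁻¹ ^ 0 * t) = Real.cos (2 * π * t) := by norm_num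
    rw [hA, he, Finset.prod_range_succ', e0]
    ring

include hθ in
lemma muHat_zero : muHat θ 0 = 1 := by
  rw [muHat]
  simp

/-- Lipschitz constant -/
noncomputable def Cθ (θ : ℝ) : ℝ := 2 * π * (1 - θ⁻¹)⁻¹

include hθ in
lemma Cθ_pos : 0 < Cθ θ := by
  have hr1 : θ⁻¹ < 1 := inv_lt_one_of_one_lt₀ hθ
  have : 0 < 1 - θ⁻¹ := by linarith
  unfold Cθ
  positivity

include hθ in
lemma muHat_lip (s t : ℝ) : |muHat θ s - muHat θ t| ≤ Cθ θ * |s - t| := by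
  have hθ0 : (0:ℝ) < θ := lt_trans one_pos hθ
  have hr0 : 0 < θ⁻¹ := inv_pos.2 hθ0
  have hr1 : θ⁻¹ < 1 := inv_lt_one_of_one_lt₀ hθ
  have hs := limP hθ s
  have ht := limP hθ t
  have hdiff : Tendsto (fun n => |(∏ k ∈ Finset.range n, Real.cos (2 * π * θ⁻¹ ^ k * s))
      - ∏ k ∈ Finset.range n, Real.cos (2 * π * θ⁻¹ ^ k * t)|) atTop
      (𝓝 |muHat θ s - muHat θ t|) := (hs.sub ht).abs
  apply le_of_tendsto hdiff
  filter_upwards with n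
  calc |(∏ k ∈ Finset.range n, Real.cos (2 * π * θ⁻¹ ^ k * s))
      - ∏ k ∈ Finset.range n, Real.cos (2 * π * θ⁻¹ ^ k * t)|
      ≤ ∑ k ∈ Finset.range n, |Real.cos (2 * π * θ⁻¹ ^ k * s) - Real.cos (2 * π * θ⁻¹ ^ k * t)| :=
        Stmt18Aux.prod_sub_prod_le n _ _ (fun i => Real.abs_cos_le_one _)
          (fun i => Real.abs_cos_le_one _)
    _ ≤ ∑ k ∈ Finset.range n, 2 * π * θ⁻¹ ^ k * |s - t| := by
        apply Finset.sum_le_sum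
        intro k _
        calc |Real.cos (2 * π * θ⁻¹ ^ k * s) - Real.cos (2 * π * θ⁻¹ ^ k * t)|
            ≤ |2 * π * θ⁻¹ ^ k * s - 2 * π * θ⁻¹ ^ k * t| := Stmt18Aux.cos_lip _ _
          _ = 2 * π * θ⁻¹ ^ k * |s - t| := by
              rw [← mul_sub, abs_mul, abs_of_nonneg (by positivity : (0:ℝ) ≤ 2 * π * θ⁻¹ ^ k)]
    _ ≤ Cθ θ * |s - t| := by
        rw [← Finset.sum_mul]
        apply mul_le_mul_of_nonneg_right _ (abs_nonneg _)
        have : ∑ k ∈ Finset.range n, 2 * π * θ⁻¹ ^ k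
            = 2 * π * ∑ k ∈ Finset.range n, θ⁻¹ ^ k := by rw [Finset.mul_sum]
        rw [this]
        unfold Cθ
        apply mul_le_mul_of_nonneg_left _ (by positivity : (0:ℝ) ≤ 2 * π)
        have hgeom : ∑ k ∈ Finset.range n, θ⁻¹ ^ k = (1 - θ⁻¹ ^ n) / (1 - θ⁻¹) := by
          rw [geom_sum_eq (ne_of_lt hr1)]
          rw [div_eq_div_iff (by linarith) (by linarith)]
          ring
        have hpn : (0:ℝ) ≤ θ⁻¹ ^ n := by positivity
        have h1r : (0:ℝ) < 1 - θ⁻¹ := by linarith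
        rw [hgeom, div_le_iff₀ h1r, inv_mul_cancel₀ (ne_of_gt h1r)]
        linarith

end Mu

section Mu2

variable {θ : ℝ} (hθ : 1 < θ)

include hθ in
lemma muHat_near_one (w : ℝ) : 1 - Cθ θ * |w| ≤ |muHat θ w| := by
  have h := muHat_lip hθ 0 w
  rw [muHat_zero hθ] at h
  have h2 : |(0:ℝ) - w| = |w| := by rw [zero_sub, abs_neg]
  rw [h2] at h
  have h3 : 1 - muHat θ w ≤ |1 - muHat θ w| := le_abs_self _
  have h4 : muHat θ w ≤ |muHat θ w| := le_abs_self _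
  linarith

include hθ in
lemma muHat_continuous : Continuous (muHat θ) := by
  have : LipschitzWith ⟨Cθ θ, (Cθ_pos hθ).le⟩ (muHat θ) := by
    apply LipschitzWith.of_dist_le_mul
    intro s t
    rw [Real.dist_eq, Real.dist_eq]
    exact muHat_lip hθ s t
  exact this.continuous

include hθ in
lemma hsc (v : ℝ) (m : ℤ) (k : ℕ) : θ⁻¹ ^ k * (v * θ ^ m) = v * θ ^ (m - k) := by
  have hθ0 : (0:ℝ) < θ := lt_trans one_pos hθ
  have hne : θ ≠ 0 := ne_of_gt hθ0
  rw [inv_pow, ← zpow_natCast θ k, ← zpow_neg, sub_eq_add_neg, zpow_add₀ hne]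
  ring

include hθ in
lemma muHat_abs_mono (t : ℝ) (n : ℕ) : |muHat θ t| ≤ |muHat θ (θ⁻¹ ^ n * t)| := by
  rw [muHat_iter hθ t n, abs_mul]
  apply mul_le_of_le_one_left (abs_nonneg _)
  rw [Finset.abs_prod]
  exact Finset.prod_le_one (fun i _ => abs_nonneg _) (fun i _ => Real.abs_cos_le_one _)

include hθ in
lemma muHat_le_prod (t : ℝ) (n : ℕ) :
    |muHat θ t| ≤ ∏ k ∈ Finset.range n, |Real.cos (2 * π * θ⁻¹ ^ k * t)| := by
  rw [muHat_iter hθ t n, abs_mul, ← Finset.abs_prod]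
  exact mul_le_of_le_one_right (abs_nonneg _) (abs_muHat_le_one hθ _)

end Mu2

set_option maxHeartbeats 2000000 in
theorem stmt18' (θ : ℝ) (hθ1 : 1 < θ)
    (h : ¬ Tendsto (muHat θ) atTop (𝓝 0)) :
    ¬ Tendsto (fun n : ℕ => muHat θ n) atTop (𝓝 0) := by
  intro hT
  have hθ0 : (0:ℝ) < θ := lt_trans one_pos hθ1
  have hθne : θ ≠ 0 := ne_of_gt hθ0
  have hCpos : 0 < Cθ θ := Cθ_pos hθ1
  -- Step 1 : extract η
  obtain ⟨η, hη0, hηfreq⟩ : ∃ η > 0, ∀ b : ℝ, ∃ t ≥ b, η ≤ |muHat θ t| := by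
    have h2 : ¬ ∀ ε > 0, ∀ᶠ t in atTop, |muHat θ t| < ε := by
      intro hcon
      apply h
      rw [Metric.tendsto_nhds]
      intro ε hε
      filter_upwards [hcon ε hε] with t ht
      rwa [Real.dist_eq, sub_zero]
    push_neg at h2
    obtain ⟨ε, hε, h3⟩ := h2
    refine ⟨ε, hε, ?_⟩
    intro b
    obtain ⟨t, htb, ht⟩ := (frequently_atTop.mp h3) b
    exact ⟨t, htb, ht⟩
  have hη1 : η ≤ 1 := by
    obtain ⟨t, -, ht⟩ := hηfreq 0
    exact le_trans ht (abs_muHat_le_one hθ1 t)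
  -- Step 2 : sequence
  have hseq : ∀ j : ℕ, ∃ t : ℝ, max (j:ℝ) 1 ≤ t ∧ η ≤ |muHat θ t| := by
    intro j
    obtain ⟨t, h1, h2⟩ := hηfreq (max (j:ℝ) 1)
    exact ⟨t, h1, h2⟩
  choose ts hts1 hts2 using hseq
  have hts_ge1 : ∀ j, 1 ≤ ts j := fun j => le_trans (le_max_right _ _) (hts1 j)
  have hts_pos : ∀ j, 0 < ts j := fun j => lt_of_lt_of_le one_pos (hts_ge1 j)
  have hts_gej : ∀ j : ℕ, (j:ℝ) ≤ ts j := fun j => le_trans (le_max_left _ _) (hts1 j)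
  -- Step 3 : scale into [1, θ]
  set kk : ℕ → ℕ := fun j => ⌊Real.logb θ (ts j)⌋₊ with hkk
  have hpow_le : ∀ j, θ ^ (kk j) ≤ ts j := by
    intro j
    have hlb : (0:ℝ) ≤ Real.logb θ (ts j) := Real.logb_nonneg hθ1 (hts_ge1 j)
    have h1 : ((kk j : ℕ) : ℝ) ≤ Real.logb θ (ts j) := Nat.floor_le hlb
    calc θ ^ (kk j) = θ ^ ((kk j : ℕ) : ℝ) := (Real.rpow_natCast θ _).symm
      _ ≤ θ ^ (Real.logb θ (ts j)) := Real.rpow_le_rpow_of_exponent_le hθ1.le h1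
      _ = ts j := Real.rpow_logb hθ0 (ne_of_gt hθ1) (hts_pos j)
  have hpow_lt : ∀ j, ts j < θ ^ (kk j + 1) := by
    intro j
    have h1 : Real.logb θ (ts j) < (kk j : ℝ) + 1 := Nat.lt_floor_add_one _
    calc ts j = θ ^ (Real.logb θ (ts j)) := (Real.rpow_logb hθ0 (ne_of_gt hθ1) (hts_pos j)).symm
      _ < θ ^ (((kk j + 1 : ℕ)) : ℝ) := by
          apply Real.rpow_lt_rpow_of_exponent_lt hθ1
          push_cast
          exact h1
      _ = θ ^ (kk j + 1) := Real.rpow_natCast θ _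
  set u' : ℕ → ℝ := fun j => θ⁻¹ ^ (kk j) * ts j with hu'
  have hu'mem : ∀ j, u' j ∈ Icc (1:ℝ) θ := by
    intro j
    have hp : (0:ℝ) < θ ^ (kk j) := pow_pos hθ0 _
    constructor
    · rw [hu']
      simp only
      rw [inv_pow, inv_mul_eq_div, le_div_iff₀ hp, one_mul]
      exact hpow_le j
    · rw [hu']
      simp only
      rw [inv_pow, inv_mul_eq_div, div_le_iff₀ hp]
      have := hpow_lt j
      rw [pow_succ] at this
      linarith [this]
  -- Step 4 : subsequence
  obtain ⟨u, humem, φ, hφ, hconv⟩ := (isCompact_Icc).tendsto_subseq hu'mem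
  have hu1 : (1:ℝ) ≤ u := humem.1
  have hu0 : (0:ℝ) < u := lt_of_lt_of_le one_pos hu1
  -- kk(φ j) is eventually large
  have hklarge : ∀ A : ℕ, ∀ᶠ j : ℕ in atTop, A ≤ kk (φ j) := by
    intro A
    obtain ⟨J, hJ⟩ := exists_nat_ge (θ ^ (A + 1))
    filter_upwards [eventually_ge_atTop J] with j hj
    have h1 : θ ^ (A+1) ≤ (φ j : ℝ) := by
      calc θ ^ (A+1) ≤ (J:ℝ) := hJ
        _ ≤ (j:ℝ) := by exact_mod_cast hj
        _ ≤ (φ j : ℝ) := by exact_mod_cast hφ.le_apply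
    have h2 : θ ^ (A+1) < θ ^ (kk (φ j) + 1) :=
      lt_of_le_of_lt (h1.trans (hts_gej (φ j))) (hpow_lt (φ j))
    have h3 : A + 1 < kk (φ j) + 1 := (pow_lt_pow_iff_right₀ hθ1).mp h2
    omega
  -- Step 5 : the key lower bound at all integer powers
  have hukey : ∀ m : ℤ, η ≤ |muHat θ (u * θ ^ m)| := by
    intro m
    have hev : ∀ᶠ j : ℕ in atTop, η ≤ |muHat θ (u' (φ j) * θ ^ m)| := by
      filter_upwards [hklarge m.toNat] with j hj
      set K := kk (φ j) with hK
      have hmK : m ≤ (K:ℤ) := by omega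
      set nn : ℕ := ((K:ℤ) - m).toNat with hnn
      have hnnz : ((nn:ℕ):ℤ) = (K:ℤ) - m := Int.toNat_of_nonneg (by omega)
      have hptw : θ⁻¹ ^ nn * ts (φ j) = u' (φ j) * θ ^ m := by
        have hzz : (θ:ℝ)⁻¹ ^ nn = θ⁻¹ ^ K * θ ^ m := by
          rw [inv_pow, inv_pow, ← zpow_natCast θ nn, ← zpow_natCast θ K, ← zpow_neg, ← zpow_neg,
            ← zpow_add₀ hθne]
          congr 1
          omega
        rw [hzz, hu']
        ring
      rw [← hptw]
      exact le_trans (hts2 (φ j)) (muHat_abs_mono hθ1 (ts (φ j)) nn)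
    have hmul : Tendsto (fun j => u' (φ j) * θ ^ m) atTop (𝓝 (u * θ ^ m)) :=
      hconv.mul_const _
    have habs : Tendsto (fun j => |muHat θ (u' (φ j) * θ ^ m)|) atTop (𝓝 |muHat θ (u * θ ^ m)|) :=
      (((muHat_continuous hθ1).tendsto _).comp hmul).abs
    exact ge_of_tendsto habs hev
  -- Step 6 : arithmetic sequences
  set x : ℤ → ℝ := fun m => 2 * u * θ ^ m with hx
  set N : ℤ → ℤ := fun m => round (x m) with hN
  set δ : ℤ → ℝ := fun m => x m - N m with hδ
  have hδhalf : ∀ m : ℤ, |δ m| ≤ 1/2 := fun m => abs_sub_round (x m)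
  have hxNδ : ∀ m : ℤ, x m = N m + δ m := fun m => by rw [hδ]; ring
  have lemA : ∀ (m : ℤ) (n : ℕ), η ≤ ∏ k ∈ Finset.range n, |Real.cos (π * x (m - k))| := by
    intro m n
    refine le_trans (le_trans (hukey m) (muHat_le_prod hθ1 (u * θ ^ m) n)) (le_of_eq ?_)
    apply Finset.prod_congr rfl
    intro k _
    congr 2
    rw [show (2:ℝ) * π * θ⁻¹ ^ k * (u * θ ^ m) = π * (2 * (θ⁻¹ ^ k * (u * θ ^ m))) from by ring,
      hsc hθ1]
    rw [hx]
    ring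
  have hsingle : ∀ m : ℤ, η ≤ |Real.cos (π * x m)| := by
    intro m
    have := lemA m 1
    simpa using this
  have hcos_eq : ∀ m : ℤ, |Real.cos (π * x m)| = Real.cos (π * δ m) := by
    intro m
    have h1 : π * x m = (N m : ℝ) * π - (-(π * δ m)) := by
      rw [hxNδ m]; ring
    rw [h1, Real.cos_int_mul_pi_sub, abs_mul, Real.cos_neg]
    have h2 : |((-1:ℝ)) ^ (N m)| = 1 := by
      rcases Int.even_or_odd (N m) with he | ho
      · rw [he.neg_one_zpow]; norm_num
      · rw [Odd.neg_one_zpow ho]; norm_num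
    rw [h2, one_mul]
    apply abs_of_nonneg
    apply Real.cos_nonneg_of_mem_Icc
    constructor
    · have := (abs_le.mp (hδhalf m)).1
      nlinarith [Real.pi_pos]
    · have := (abs_le.mp (hδhalf m)).2
      nlinarith [Real.pi_pos]
  have hδη : ∀ m : ℤ, η ≤ Real.cos (π * δ m) := by
    intro m
    rw [← hcos_eq m]
    exact hsingle m
  -- Step 7 : the summable error series
  set G : ℕ → ℝ := fun j => 1 - Real.cos (π * δ (j:ℤ)) with hG
  have hG0 : ∀ j, 0 ≤ G j := fun j => by
    rw [hG]; simp only; linarith [Real.cos_le_one (π * δ (j:ℤ))]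
  have hGsum : ∀ n : ℕ, ∑ j ∈ Finset.range n, G j ≤ -Real.log η := by
    intro n
    have h1 := lemA ((n:ℤ) - 1) n
    have hre : ∏ k ∈ Finset.range n, |Real.cos (π * x ((n:ℤ) - 1 - k))|
        = ∏ j ∈ Finset.range n, |Real.cos (π * x (j:ℤ))| := by
      rw [← Finset.prod_range_reflect (fun j => |Real.cos (π * x (j:ℤ))|) n]
      apply Finset.prod_congr rfl
      intro k hk
      have hkn : k < n := Finset.mem_range.mp hk
      have : ((n - 1 - k : ℕ) : ℤ) = (n:ℤ) - 1 - k := by omega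
      rw [this]
    rw [hre] at h1
    have h2 : ∏ j ∈ Finset.range n, |Real.cos (π * x (j:ℤ))|
        = ∏ j ∈ Finset.range n, (1 - G j) := by
      apply Finset.prod_congr rfl
      intro j _
      rw [hcos_eq, hG]
      ring
    rw [h2] at h1
    have h3 : ∏ j ∈ Finset.range n, (1 - G j) ≤ ∏ j ∈ Finset.range n, Real.exp (-(G j)) := by
      apply Finset.prod_le_prod
      · intro j _
        have := hδη (j:ℤ)
        rw [hG]; simp only; linarith
      · intro j _
        have := Real.add_one_le_exp (-(G j))
        linarith
    rw [← Real.exp_sum] at h3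
    have h4 : η ≤ Real.exp (∑ j ∈ Finset.range n, -(G j)) := le_trans h1 h3
    have h5 : Real.log η ≤ ∑ j ∈ Finset.range n, -(G j) := by
      calc Real.log η ≤ Real.log (Real.exp (∑ j ∈ Finset.range n, -(G j))) :=
            Real.log_le_log hη0 h4
        _ = ∑ j ∈ Finset.range n, -(G j) := Real.log_exp _
    rw [Finset.sum_neg_distrib] at h5
    linarith
  have hSummable : Summable G := summable_of_sum_range_le hG0 hGsum
  have hδsqG : ∀ j : ℕ, 2 * δ (j:ℤ) ^ 2 ≤ G j := fun j =>
    Stmt18Aux.two_delta_sq_le (δ (j:ℤ)) (hδhalf _)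
  have htail : ∀ σ : ℝ, 0 < σ → ∃ M : ℕ, ∀ n : ℕ, ∑ j ∈ Finset.Ico M n, G j ≤ σ := by
    intro σ hσ
    have htt : Tendsto (fun i => ∑' k, G (k + i)) atTop (𝓝 0) := tendsto_sum_nat_add G
    obtain ⟨M, hM⟩ := (htt.eventually (eventually_le_nhds hσ)).exists
    refine ⟨M, fun n => ?_⟩
    have hsub : Summable fun k => G (k + M) := (summable_nat_add_iff M).2 hSummable
    calc ∑ j ∈ Finset.Ico M n, G j = ∑ i ∈ Finset.range (n - M), G (M + i) :=
          by rw [Finset.sum_Ico_eq_sum_range]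
      _ = ∑ i ∈ Finset.range (n - M), G (i + M) := by
          apply Finset.sum_congr rfl; intro i _; rw [add_comm]
      _ ≤ ∑' k, G (k + M) := Summable.sum_le_tsum _ (fun i _ => hG0 _) hsub
      _ ≤ σ := hM
  -- the integer hypothesis
  have hB : ∀ c : ℝ, 0 < c → ∃ B : ℕ, ∀ n : ℕ, B ≤ n → |muHat θ (n:ℝ)| < c := by
    intro c hc
    obtain ⟨B, hB⟩ := Metric.tendsto_atTop.mp hT c hc
    refine ⟨B, fun n hn => ?_⟩
    have := hB n hn
    rwa [Real.dist_eq, sub_zero] at this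
  set C := Cθ θ with hCdef
  -- common facts
  have hxpos : ∀ m : ℤ, 0 < x m := by
    intro m
    rw [hx]
    have := zpow_pos hθ0 m
    positivity
  have hxmonoZ : ∀ a b : ℤ, a ≤ b → x a ≤ x b := by
    intro a b hab
    rw [hx]
    simp only
    have := zpow_le_zpow_right₀ hθ1.le hab
    nlinarith [zpow_pos hθ0 a]
  have hxnat : ∀ m : ℕ, 2 * θ ^ m ≤ x (m:ℤ) := by
    intro m
    rw [hx]
    simp only
    rw [zpow_natCast]
    nlinarith [pow_pos hθ0 m]
  have hNlb : ∀ m : ℤ, x m - 1/2 ≤ (N m : ℝ) := by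
    intro m
    have := (abs_le.mp (hδhalf m)).2
    rw [hδ] at this
    simp only at this
    linarith
  -- absolute-value helper : |cos (z + N π)| = |cos z|
  have habs2 : ∀ (z : ℝ) (n : ℤ), |Real.cos (z + n * π)| = |Real.cos z| := by
    intro z n
    have h1 : z + n * π = (n:ℝ) * π - (-z) := by ring
    rw [h1, Real.cos_int_mul_pi_sub, abs_mul, Real.cos_neg]
    have h2 : |((-1:ℝ)) ^ n| = 1 := by
      rcases Int.even_or_odd n with he | ho
      · rw [he.neg_one_zpow]; norm_num
      · rw [Odd.neg_one_zpow ho]; norm_num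
    rw [h2, one_mul]
  clear_value x N δ G
  -- case split on parity
  by_cases hEven : ∀ M : ℕ, ∃ m : ℕ, M ≤ m ∧ Even (N (m:ℤ))
  · -- EVEN case
    obtain ⟨B, hBspec⟩ := hB (η/2) (by linarith)
    set σe : ℝ := η^2 / (2 * C^2) with hσe
    have hσe0 : 0 < σe := by rw [hσe]; positivity
    obtain ⟨M₁, hM₁⟩ := htail σe hσe0
    obtain ⟨mb, hmb⟩ := pow_unbounded_of_one_lt ((B:ℝ) + 1) hθ1
    obtain ⟨m, hm1, hm2⟩ := hEven (max M₁ mb)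
    have hmM₁ : M₁ ≤ m := le_trans (le_max_left _ _) hm1
    have hmmb : mb ≤ m := le_trans (le_max_right _ _) hm1
    -- pointwise delta bound
    have hGm : G m ≤ σe := by
      have h1 : G m ≤ ∑ j ∈ Finset.Ico M₁ (m+1), G j := by
        apply Finset.single_le_sum (fun i _ => hG0 i)
        rw [Finset.mem_Ico]
        omega
      exact le_trans h1 (hM₁ (m+1))
    have hδm : 4 * C^2 * δ (m:ℤ)^2 ≤ η^2 := by
      have h1 := hδsqG m
      have h2 : 2 * C^2 * σe = η^2 := by
        rw [hσe]
        field_simp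
      nlinarith [sq_nonneg C, hCpos]
    have hδmabs : C * |δ (m:ℤ)| / 2 ≤ η / 4 := by
      have h1 : (0:ℝ) ≤ |δ (m:ℤ)| := abs_nonneg _
      have h2 : |δ (m:ℤ)|^2 = δ (m:ℤ)^2 := sq_abs _
      nlinarith [sq_nonneg (2 * C * |δ (m:ℤ)| - η), hη0, hCpos]
    -- the integer
    obtain ⟨p, hp⟩ := hm2
    have hpval : (N (m:ℤ) : ℝ) = 2 * p := by rw [hp]; push_cast; ring
    have hxm : 2 * ((B:ℝ) + 1) ≤ x (m:ℤ) := by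
      calc 2 * ((B:ℝ)+1) ≤ 2 * θ ^ mb := by nlinarith
        _ ≤ 2 * θ ^ m := by
            have := pow_le_pow_right₀ hθ1.le hmmb
            linarith
        _ ≤ x (m:ℤ) := hxnat m
    have hpB : (B:ℝ) < (p:ℝ) := by
      have := hNlb (m:ℤ)
      rw [hpval] at this
      linarith
    have hpB' : (B:ℤ) < p := by exact_mod_cast hpB
    have hp0 : 0 ≤ p := by omega
    set pn := p.toNat with hpndef
    have hpn : (pn:ℤ) = p := Int.toNat_of_nonneg hp0
    have hpnR : ((pn:ℕ):ℝ) = (p:ℝ) := by exact_mod_cast hpn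
    have hdist : u * θ^(m:ℤ) - (p:ℝ) = δ (m:ℤ) / 2 := by
      have h1 : u * θ^(m:ℤ) = x (m:ℤ) / 2 := by rw [hx]; ring
      rw [h1, hxNδ (m:ℤ), hpval]
      ring
    have hlow : 3*η/4 ≤ |muHat θ ((p:ℝ))| := by
      have hlip := muHat_lip hθ1 (u*θ^(m:ℤ)) ((p:ℝ))
      have h2 := abs_sub_abs_le_abs_sub (muHat θ (u*θ^(m:ℤ))) (muHat θ ((p:ℝ)))
      have h3 : |muHat θ (u*θ^(m:ℤ))| - |muHat θ ((p:ℝ))| ≤ C * (|δ (m:ℤ)|/2) := by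
        have h4 : |u * θ^(m:ℤ) - (p:ℝ)| = |δ (m:ℤ)|/2 := by
          rw [hdist, abs_div]
          norm_num
        calc |muHat θ (u*θ^(m:ℤ))| - |muHat θ ((p:ℝ))|
            ≤ |muHat θ (u*θ^(m:ℤ)) - muHat θ ((p:ℝ))| := h2
          _ ≤ C * |u * θ^(m:ℤ) - (p:ℝ)| := hlip
          _ = C * (|δ (m:ℤ)|/2) := by rw [h4]
      have h5 := hukey (m:ℤ)
      have h6 : C * (|δ (m:ℤ)|/2) ≤ η/4 := by linarith [hδmabs]
      linarith
    have hpnB : B ≤ pn := by omega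
    have hcon := hBspec pn hpnB
    rw [hpnR] at hcon
    linarith
  · -- ODD case
    push_neg at hEven
    obtain ⟨M₀, hM₀⟩ := hEven
    have hOddN : ∀ m : ℕ, M₀ ≤ m → Odd (N (m:ℤ)) := fun m hm =>
      Int.not_even_iff_odd.mp (hM₀ m hm)
    set σ : ℝ := η^2 / (8 * π^2) with hσdef
    have hσ0 : 0 < σ := by rw [hσdef]; positivity
    obtain ⟨Mt, hMt⟩ := htail σ hσ0
    set M₁ : ℕ := max Mt M₀ with hM₁def
    have hM₁t : Mt ≤ M₁ := le_max_left _ _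
    have hM₁0 : M₀ ≤ M₁ := le_max_right _ _
    have hIco : ∀ a n : ℕ, M₁ ≤ a → ∑ j ∈ Finset.Ico a n, G j ≤ σ := by
      intro a n ha
      refine le_trans (Finset.sum_le_sum_of_subset_of_nonneg ?_ (fun i _ _ => hG0 i)) (hMt n)
      exact Finset.Ico_subset_Ico (le_trans hM₁t ha) le_rfl
    have hpt : ∀ m : ℕ, M₁ ≤ m → G m ≤ σ := by
      intro m hm
      have h1 : G m ≤ ∑ j ∈ Finset.Ico m (m+1), G j := by
        apply Finset.single_le_sum (fun i _ => hG0 i)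
        rw [Finset.mem_Ico]; omega
      exact le_trans h1 (hIco m (m+1) hm)
    have hδptZ : ∀ m : ℤ, (M₁:ℤ) ≤ m → δ m^2 ≤ σ/2 := by
      intro m hm
      have h0 : 0 ≤ m := le_trans (Int.ofNat_nonneg M₁) hm
      have h1 : ((m.toNat:ℕ):ℤ) = m := Int.toNat_of_nonneg h0
      have h2 : M₁ ≤ m.toNat := by omega
      have h3 := hδsqG m.toNat
      have h4 := hpt m.toNat h2
      rw [h1] at h3
      linarith
    have hOddZ : ∀ m : ℤ, (M₁:ℤ) ≤ m → Odd (N m) := by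
      intro m hm
      have h0 : 0 ≤ m := le_trans (Int.ofNat_nonneg M₁) hm
      have h1 : ((m.toNat:ℕ):ℤ) = m := Int.toNat_of_nonneg h0
      have h2 : M₀ ≤ m.toNat := by omega
      have := hOddN m.toNat h2
      rwa [h1] at this
    have hδsmallZ : ∀ m : ℤ, (M₁:ℤ) ≤ m → π * |δ m| ≤ η/4 := by
      intro m hm
      have h1 := hδptZ m hm
      have h2 : (π * |δ m|)^2 ≤ π^2 * (σ/2) := by
        rw [mul_pow, sq_abs]
        nlinarith [Real.pi_pos]
      have h3 : π^2 * (σ/2) = η^2/16 := by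
        rw [hσdef]; field_simp; ring
      nlinarith [mul_nonneg Real.pi_pos.le (abs_nonneg (δ m)), hη0]
    have hπσ : π^2 * σ = η^2/8 := by rw [hσdef]; field_simp
    -- choose q
    obtain ⟨q, hq⟩ : ∃ q : ℕ, π * x (M₁:ℤ) * θ⁻¹^q ≤ η/2 := by
      have htend : Tendsto (fun q : ℕ => π * x (M₁:ℤ) * θ⁻¹^q) atTop (𝓝 0) := by
        simpa using (tendsto_pow_atTop_nhds_zero_of_lt_one (inv_pos.2 hθ0).le
          (inv_lt_one_of_one_lt₀ hθ1)).const_mul (π * x (M₁:ℤ))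
      exact (htend.eventually (eventually_le_nhds (by positivity))).exists
    set v : ℝ := u * (1 + θ^q) with hvdef
    have hv0 : 0 < v := by
      rw [hvdef]
      have := pow_pos hθ0 q
      nlinarith
    -- choose Mneg
    obtain ⟨Mn', hMn'⟩ : ∃ Mn : ℕ, C * v * θ⁻¹^Mn ≤ 1/4 := by
      have htend : Tendsto (fun n : ℕ => C * v * θ⁻¹^n) atTop (𝓝 0) := by
        simpa using (tendsto_pow_atTop_nhds_zero_of_lt_one (inv_pos.2 hθ0).le
          (inv_lt_one_of_one_lt₀ hθ1)).const_mul (C * v)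
      exact (htend.eventually (eventually_le_nhds (by norm_num))).exists
    set Mneg : ℕ := Mn' + 1 with hMnegdef
    have hMneg1 : 1 ≤ Mneg := by omega
    have hMneg : C * v * θ⁻¹^Mneg ≤ 1/4 := by
      have h1 : θ⁻¹^Mneg ≤ θ⁻¹^Mn' := by
        apply pow_le_pow_of_le_one (inv_pos.2 hθ0).le (inv_lt_one_of_one_lt₀ hθ1).le
        omega
      have h2 : 0 < C * v := mul_pos hCpos hv0
      nlinarith
    -- basic identities
    have hxsum : ∀ a : ℤ, 2 * (v * θ^a) = x a + x (a + q) := by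
      intro a
      rw [hx, hvdef]
      simp only
      rw [zpow_add₀ hθne a (q:ℤ), zpow_natCast]
      ring
    have hfact : ∀ (i k : ℕ), 2*π*θ⁻¹^k*(v*θ^(i:ℤ)) = π * (x ((i:ℤ)-k) + x ((i:ℤ)-k+q)) := by
      intro i k
      rw [show (2:ℝ)*π*θ⁻¹^k*(v*θ^(i:ℤ)) = π * (2 * (θ⁻¹^k * (v*θ^(i:ℤ)))) from by ring,
        hsc hθ1, hxsum]
    -- block A factor bound
    have hfactA : ∀ m : ℤ, (M₁:ℤ) ≤ m →
        (1 - π^2*(δ m^2 + δ (m+q)^2) ≤ Real.cos (π * (x m + x (m+q)))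
        ∧ π^2*(δ m^2 + δ (m+q)^2) ≤ 1/8) := by
      intro m hm
      have hOm := hOddZ m hm
      have hOq := hOddZ (m+q) (by omega)
      obtain ⟨cc, hcc⟩ := Odd.add_odd hOm hOq
      have hccR : ((N m):ℝ) + ((N (m+q)):ℝ) = 2*cc := by
        have h0 : N m + N (m+q) = 2 * cc := by omega
        exact_mod_cast h0
      have he : π * (x m + x (m+q)) = π * (δ m + δ (m+q)) + (cc:ℝ) * (2*π) := by
        rw [hxNδ m, hxNδ (m+q)]
        linear_combination π * hccR
      refine ⟨?_, ?_⟩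
      · rw [he, Real.cos_add_int_mul_two_pi]
        refine le_trans ?_ Real.one_sub_sq_div_two_le_cos
        nlinarith [sq_nonneg (π * δ m - π * δ (m+q)), Real.pi_pos]
      · have h1 := hδptZ m hm
        have h2 := hδptZ (m+q) (by omega)
        nlinarith [sq_nonneg π, hη1, hη0, hπσ]
    -- the main lower bound
    set cB : ℝ := (1/2) * (η/2)^(M₁ + Mneg) with hcBdef
    have hcB0 : 0 < cB := by rw [hcBdef]; positivity
    have hmain : ∀ i : ℕ, M₁ ≤ i → cB ≤ |muHat θ (v * θ^(i:ℤ))| := by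
      intro i hi
      set L : ℕ := i - M₁ + 1 with hLdef
      set R : ℕ := M₁ + Mneg - 1 with hRdef
      have hLR : L + R = i + Mneg := by omega
      have hiter := muHat_iter hθ1 (v * θ^(i:ℤ)) (i + Mneg)
      have htailpt : θ⁻¹^(i+Mneg) * (v*θ^(i:ℤ)) = v * θ^(-(Mneg:ℤ)) := by
        rw [hsc hθ1]
        have hee : (i:ℤ) - ((i+Mneg:ℕ):ℤ) = -(Mneg:ℤ) := by push_cast; ring
        rw [hee]
      have htb : 3/4 ≤ |muHat θ (v * θ^(-(Mneg:ℤ)))| := by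
        have h1 := muHat_near_one hθ1 (v * θ^(-(Mneg:ℤ)))
        have hvp : 0 < v * θ^(-(Mneg:ℤ)) := mul_pos hv0 (zpow_pos hθ0 _)
        have h2 : Cθ θ * |v * θ^(-(Mneg:ℤ))| ≤ 1/4 := by
          rw [abs_of_pos hvp]
          have hz : θ^(-(Mneg:ℤ)) = θ⁻¹^Mneg := by
            rw [zpow_neg, zpow_natCast, inv_pow]
          rw [hz, ← mul_assoc]
          exact hMneg
        linarith
      -- block A
      have hA : (7:ℝ)/8 ≤ |∏ k ∈ Finset.range L, Real.cos (2*π*θ⁻¹^k*(v*θ^(i:ℤ)))| := by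
        have hidx : ∀ k, k < L → (M₁:ℤ) ≤ (i:ℤ) - k := by
          intro k hk
          have : k ≤ i - M₁ := by omega
          omega
        have hprodeq : ∏ k ∈ Finset.range L, Real.cos (2*π*θ⁻¹^k*(v*θ^(i:ℤ)))
            = ∏ k ∈ Finset.range L, Real.cos (π * (x ((i:ℤ)-k) + x ((i:ℤ)-k+q))) :=
          Finset.prod_congr rfl (fun k _ => by rw [hfact i k])
        set aa : ℕ → ℝ := fun k => π^2*(δ ((i:ℤ)-k)^2 + δ ((i:ℤ)-k+q)^2) with haadef
        have haa0 : ∀ k, 0 ≤ aa k := fun k => by rw [haadef]; positivity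
        have haa1 : ∀ k, k < L → aa k ≤ 1 := by
          intro k hk
          have h1 := (hfactA ((i:ℤ)-k) (hidx k hk)).2
          rw [haadef]
          simp only
          linarith
        have hsumaa : ∑ k ∈ Finset.range L, aa k ≤ 1/8 := by
          set g : ℕ → ℝ := fun j => δ (j:ℤ)^2 with hgdef
          have hS1 : ∑ k ∈ Finset.range L, δ ((i:ℤ)-k)^2 = ∑ j ∈ Finset.Ico M₁ (i+1), g j := by
            rw [← Stmt18Aux.sum_shift g M₁ i hi]
            apply Finset.sum_congr rfl
            intro k hk
            have hk' := Finset.mem_range.mp hk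
            rw [hgdef]
            simp only
            congr 2
            have hki : k ≤ i := by omega
            omega
          have hS2 : ∑ k ∈ Finset.range L, δ ((i:ℤ)-k+q)^2
              = ∑ j ∈ Finset.Ico (M₁+q) (i+1+q), g j := by
            rw [← Stmt18Aux.sum_Ico_shift g M₁ (i+1) q,
              ← Stmt18Aux.sum_shift (fun j => g (j+q)) M₁ i hi]
            apply Finset.sum_congr rfl
            intro k hk
            have hk' := Finset.mem_range.mp hk
            rw [hgdef]
            simp only
            congr 2
            have hki : k ≤ i := by omega
            omega
          have hgG : ∀ (a b : ℕ), M₁ ≤ a → ∑ j ∈ Finset.Ico a b, g j ≤ σ/2 := by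
            intro a b ha
            have h1 : ∑ j ∈ Finset.Ico a b, g j ≤ ∑ j ∈ Finset.Ico a b, (G j / 2) := by
              apply Finset.sum_le_sum
              intro j _
              have h2 := hδsqG j
              rw [hgdef]
              simp only
              linarith
            have h3 : ∑ j ∈ Finset.Ico a b, (G j / 2) = (∑ j ∈ Finset.Ico a b, G j) / 2 := by
              rw [← Finset.sum_div]
            have h4 := hIco a b ha
            linarith
          have hsum1 : ∑ k ∈ Finset.range L, aa k
              = π^2 * ((∑ k ∈ Finset.range L, δ ((i:ℤ)-k)^2)
                + ∑ k ∈ Finset.range L, δ ((i:ℤ)-k+q)^2) := by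
            rw [← Finset.sum_add_distrib, Finset.mul_sum]
          have hb1 := hgG M₁ (i+1) le_rfl
          have hb2 := hgG (M₁+q) (i+1+q) (by omega)
          rw [hsum1, hS1, hS2]
          nlinarith [sq_nonneg π, hη1, hη0, hπσ, hb1, hb2]
        have h5 : 1 - ∑ k ∈ Finset.range L, aa k ≤ ∏ k ∈ Finset.range L, (1 - aa k) :=
          Stmt18Aux.one_sub_sum_le_prod L aa (fun j _ => haa0 j) haa1
        have h6 : ∏ k ∈ Finset.range L, (1 - aa k)
            ≤ ∏ k ∈ Finset.range L, Real.cos (π * (x ((i:ℤ)-k) + x ((i:ℤ)-k+q))) := by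
          apply Finset.prod_le_prod
          · intro k hk
            have := haa1 k (Finset.mem_range.mp hk)
            linarith
          · intro k hk
            exact (hfactA ((i:ℤ)-k) (hidx k (Finset.mem_range.mp hk))).1
        have h7 := le_abs_self (∏ k ∈ Finset.range L, Real.cos (π * (x ((i:ℤ)-k) + x ((i:ℤ)-k+q))))
        rw [hprodeq]
        linarith
      -- block B
      have hB2 : (η/2)^R ≤ |∏ j ∈ Finset.range R, Real.cos (2*π*θ⁻¹^(L+j)*(v*θ^(i:ℤ)))| := by
        rw [Finset.abs_prod]
        have hfb : ∀ j ∈ Finset.range R, η/2 ≤ |Real.cos (2*π*θ⁻¹^(L+j)*(v*θ^(i:ℤ)))| := by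
          intro j hj
          rw [hfact i (L+j)]
          set m : ℤ := (i:ℤ) - ((L+j:ℕ):ℤ) with hmdef
          by_cases hcase : (M₁:ℤ) ≤ m + q
          · have hsplit : π * (x m + x (m+q)) = (π * x m + π * δ (m+q)) + (N (m+q):ℝ) * π := by
              rw [hxNδ (m+q)]; ring
            rw [hsplit, habs2]
            have h1 := hsingle m
            have h2 := hδsmallZ (m+q) hcase
            have h4 := abs_sub_abs_le_abs_sub (Real.cos (π*x m)) (Real.cos (π*x m + π*δ (m+q)))
            have h5 := Stmt18Aux.cos_lip (π*x m) (π*x m + π*δ (m+q))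
            have h6 : |π*x m - (π*x m + π*δ (m+q))| = π * |δ (m+q)| := by
              rw [show π*x m - (π*x m + π*δ (m+q)) = -(π * δ (m+q)) from by ring, abs_neg,
                abs_mul, abs_of_pos Real.pi_pos]
            linarith
          · push_neg at hcase
            have hxmb : π * x m ≤ η/2 := by
              have hpq : (0:ℝ) < θ^q := pow_pos hθ0 q
              have h1 : x (m+q) = x m * θ^q := by
                rw [hx]
                simp only
                rw [zpow_add₀ hθne, zpow_natCast]
                ring
              have h2 : x (m+q) ≤ x (M₁:ℤ) := hxmonoZ _ _ (by omega)
              have h4 : x m = x (m+q) * (θ^q)⁻¹ := by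
                rw [h1]
                field_simp
              calc π * x m = π * x (m+q) * (θ^q)⁻¹ := by rw [h4]; ring
                _ ≤ π * x (M₁:ℤ) * (θ^q)⁻¹ := by
                    apply mul_le_mul_of_nonneg_right _ (by positivity)
                    nlinarith [Real.pi_pos]
                _ = π * x (M₁:ℤ) * θ⁻¹^q := by rw [inv_pow]
                _ ≤ η/2 := hq
            have hsplit2 : π * (x m + x (m+q)) = π * x (m+q) + π * x m := by ring
            rw [hsplit2]
            have h1 := hsingle (m+q)
            have h4 := abs_sub_abs_le_abs_sub (Real.cos (π*x (m+q))) (Real.cos (π*x (m+q) + π*x m))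
            have h5 := Stmt18Aux.cos_lip (π*x (m+q)) (π*x (m+q) + π*x m)
            have h6 : |π*x (m+q) - (π*x (m+q) + π*x m)| = π * x m := by
              rw [show π*x (m+q) - (π*x (m+q) + π*x m) = -(π * x m) from by ring, abs_neg,
                abs_of_pos (mul_pos Real.pi_pos (hxpos m))]
            linarith
        calc (η/2)^R = ∏ _j ∈ Finset.range R, (η/2) := by
              rw [Finset.prod_const, Finset.card_range]
          _ ≤ ∏ j ∈ Finset.range R, |Real.cos (2*π*θ⁻¹^(L+j)*(v*θ^(i:ℤ)))| :=
              Finset.prod_le_prod (fun j _ => by positivity) hfb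
      -- combine
      rw [hiter, htailpt, abs_mul, ← hLR, Finset.prod_range_add, abs_mul]
      have hpowR : (η/2)^(M₁ + Mneg) ≤ (η/2)^R := by
        apply pow_le_pow_of_le_one (by positivity) (by linarith) (by omega)
      have hnn1 : (0:ℝ) ≤ |∏ k ∈ Finset.range L, Real.cos (2*π*θ⁻¹^k*(v*θ^(i:ℤ)))| := abs_nonneg _
      have hnn2 : (0:ℝ) ≤ |∏ j ∈ Finset.range R, Real.cos (2*π*θ⁻¹^(L+j)*(v*θ^(i:ℤ)))| := abs_nonneg _
      have hnn3 : (0:ℝ) ≤ |muHat θ (v * θ^(-(Mneg:ℤ)))| := abs_nonneg _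
      have hpR0 : (0:ℝ) ≤ (η/2)^R := by positivity
      calc cB ≤ (7/8) * ((η/2)^R * (3/4)) := by
            rw [hcBdef]
            nlinarith [hpowR, pow_nonneg (by linarith : (0:ℝ) ≤ η/2) (M₁+Mneg)]
        _ ≤ |∏ k ∈ Finset.range L, Real.cos (2*π*θ⁻¹^k*(v*θ^(i:ℤ)))|
            * (|∏ j ∈ Finset.range R, Real.cos (2*π*θ⁻¹^(L+j)*(v*θ^(i:ℤ)))|
              * |muHat θ (v * θ^(-(Mneg:ℤ)))|) := by
            apply mul_le_mul hA _ (by positivity) hnn1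
            exact mul_le_mul hB2 htb (by norm_num) hnn2
        _ = |∏ k ∈ Finset.range L, Real.cos (2*π*θ⁻¹^k*(v*θ^(i:ℤ)))|
            * |∏ j ∈ Finset.range R, Real.cos (2*π*θ⁻¹^(L+j)*(v*θ^(i:ℤ)))|
            * |muHat θ (v * θ^(-(Mneg:ℤ)))| := by ring
    -- conclusion of the odd case
    obtain ⟨B, hBspec⟩ := hB (cB/2) (by linarith)
    set σ2 : ℝ := cB^2 / (2 * C^2) with hσ2def
    have hσ20 : 0 < σ2 := by rw [hσ2def]; positivity
    obtain ⟨M₂, hM₂⟩ := htail σ2 hσ20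
    obtain ⟨ib, hib⟩ := pow_unbounded_of_one_lt ((B:ℝ) + 1) hθ1
    set i : ℕ := max (max M₁ M₂) ib with hidef
    have hiM₁ : M₁ ≤ i := le_trans (le_max_left _ _) (le_max_left _ _)
    have hiM₂ : M₂ ≤ i := le_trans (le_max_right _ _) (le_max_left _ _)
    have hiib : ib ≤ i := le_max_right _ _
    have hδs : ∀ m : ℕ, M₂ ≤ m → C * |δ (m:ℤ)| ≤ cB/2 := by
      intro m hm
      have h1 : G m ≤ σ2 := by
        have h2 : G m ≤ ∑ j ∈ Finset.Ico M₂ (m+1), G j := by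
          apply Finset.single_le_sum (fun i _ => hG0 i)
          rw [Finset.mem_Ico]; omega
        exact le_trans h2 (hM₂ (m+1))
      have h3 := hδsqG m
      have h4 : 4 * C^2 * δ (m:ℤ)^2 ≤ cB^2 := by
        have h5 : 2 * C^2 * σ2 = cB^2 := by rw [hσ2def]; field_simp
        nlinarith [sq_nonneg C]
      have h6 : |δ (m:ℤ)|^2 = δ (m:ℤ)^2 := sq_abs _
      nlinarith [sq_nonneg (2*C*|δ (m:ℤ)| - cB), abs_nonneg (δ (m:ℤ)), hcB0, hCpos]
    -- the even integer near v θ^i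
    have hOi := hOddN i (by omega)
    have hOiq := hOddN (i+q) (by omega)
    obtain ⟨cc, hcc⟩ := Odd.add_odd hOi hOiq
    have hccZ : N (i:ℤ) + N ((i+q:ℕ):ℤ) = 2 * cc := by omega
    have hiq : ((i+q:ℕ):ℤ) = (i:ℤ) + q := by push_cast; ring
    have hsplitp : v * θ^(i:ℤ) - (cc:ℝ) = (δ (i:ℤ) + δ ((i:ℤ)+q))/2 := by
      have h1 := hxsum (i:ℤ)
      have h2 : ((N (i:ℤ)):ℝ) + ((N ((i:ℤ)+q)):ℝ) = 2*cc := by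
        rw [← hiq]
        exact_mod_cast hccZ
      have h3 := hxNδ (i:ℤ)
      have h4 := hxNδ ((i:ℤ)+q)
      linarith
    -- cc ≥ B
    have hccB : (B:ℝ) < (cc:ℝ) := by
      have h1 : 2*((B:ℝ)+1) ≤ x (i:ℤ) := by
        calc 2*((B:ℝ)+1) ≤ 2*θ^ib := by nlinarith
          _ ≤ 2*θ^i := by
              have := pow_le_pow_right₀ hθ1.le hiib
              linarith
          _ ≤ x (i:ℤ) := hxnat i
      have h2 : 0 < x ((i:ℤ)+q) := hxpos _
      have h3 := hNlb (i:ℤ)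
      have h4 := hNlb ((i:ℤ)+q)
      have h5 : ((N (i:ℤ)):ℝ) + ((N ((i:ℤ)+q)):ℝ) = 2*cc := by
        rw [← hiq]
        exact_mod_cast hccZ
      linarith
    have hcc0 : 0 ≤ cc := by
      have : (0:ℝ) ≤ (B:ℝ) := Nat.cast_nonneg B
      have : (0:ℝ) < (cc:ℝ) := lt_of_le_of_lt this hccB
      exact_mod_cast this.le
    set pn : ℕ := cc.toNat with hpndef
    have hpn : ((pn:ℕ):ℤ) = cc := Int.toNat_of_nonneg hcc0
    have hpnR : ((pn:ℕ):ℝ) = (cc:ℝ) := by exact_mod_cast hpn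
    have hpnB : B ≤ pn := by
      have : (B:ℤ) < cc := by exact_mod_cast hccB
      omega
    -- final contradiction
    have hlow : cB/2 ≤ |muHat θ ((cc:ℝ))| := by
      have hm1 := hmain i hiM₁
      have hlip := muHat_lip hθ1 (v*θ^(i:ℤ)) ((cc:ℝ))
      have h2 := abs_sub_abs_le_abs_sub (muHat θ (v*θ^(i:ℤ))) (muHat θ ((cc:ℝ)))
      have hd1 := hδs i hiM₂
      have hd2 := hδs (i+q) (by omega)
      rw [hiq] at hd2
      have h3 : |v * θ^(i:ℤ) - (cc:ℝ)| ≤ (|δ (i:ℤ)| + |δ ((i:ℤ)+q)|)/2 := by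
        rw [hsplitp]
        rw [abs_div]
        have := abs_add_le (δ (i:ℤ)) (δ ((i:ℤ)+q))
        rw [abs_of_pos (by norm_num : (0:ℝ) < 2)]
        linarith
      have h4 : Cθ θ * |v * θ^(i:ℤ) - (cc:ℝ)| ≤ cB/2 := by
        have h5 : Cθ θ * |v * θ^(i:ℤ) - (cc:ℝ)| ≤ C * ((|δ (i:ℤ)| + |δ ((i:ℤ)+q)|)/2) := by
          apply mul_le_mul_of_nonneg_left h3 hCpos.le
        have h6 : C * ((|δ (i:ℤ)| + |δ ((i:ℤ)+q)|)/2) ≤ cB/2 := by linarith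
        linarith
      linarith
    have hcon := hBspec pn hpnB
    rw [hpnR] at hcon
    linarith

theorem stmt18 (θ : ℝ) (hθ : IsPisot θ) (hθ2 : θ ≠ 2)
    (h : ¬ Tendsto (muHat θ) atTop (𝓝 0)) :
    ¬ Tendsto (fun n : ℕ => muHat θ n) atTop (𝓝 0) :=
  stmt18' θ hθ.1 h
end
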